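/- arXiv:2310.15902 — 7 statements merged into one kernel-verified Lean document; each statement's English description precedes it below -/
import Mathlib

section
/- If a finite simplicial complex K collapses to a subcomplex L (via a sequence of elementary collapses), then the inclusion map L ↪ K is a homotopy equivalence. -/
/-- An elementary collapse from `K` to `L`: `L` is obtained from `K` by removing a pair
`{σ, τ}` where `σ` is a free face of `τ`, i.e. `τ` is the unique face of `K` properly
containing `σ`. -/
def ElemCollapse {m : ℕ} (K L : Geometry.SimplicialComplex ℝ (EuclideanSpace ℝ (Fin m))) :
    Prop :=
  ∃ σ τ : Finset (EuclideanSpace ℝ (Fin m)),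
    σ ∈ K.faces ∧ τ ∈ K.faces ∧ σ ⊂ τ ∧
    (∀ υ ∈ K.faces, σ ⊂ υ → υ = τ) ∧
    L.faces = K.faces \ {σ, τ}

/-- `K` collapses to `L` if there is a finite sequence of elementary collapses from `K` to `L`. -/
def CollapsesTo {m : ℕ} (K L : Geometry.SimplicialComplex ℝ (EuclideanSpace ℝ (Fin m))) :
    Prop :=
  Relation.ReflTransGen (fun A B => ElemCollapse A B) K L

noncomputable section
open Geometry Set Finset

attribute [local instance] Classical.propDecidable
set_option linter.unusedSectionVars false

variable {E : Type*} [NormedAddCommGroup E] [NormedSpace ℝ E] [FiniteDimensional ℝ E]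

def inclCM {K L : Geometry.SimplicialComplex ℝ E} (h : L.space ⊆ K.space) :
    C(L.space, K.space) := ⟨Set.inclusion h, continuous_inclusion h⟩

def HEquivIncl (K L : Geometry.SimplicialComplex ℝ E) : Prop :=
  ∃ h : L.space ⊆ K.space, ∃ g : C(K.space, L.space),
    ((inclCM h).comp g).Homotopic (ContinuousMap.id _) ∧
    (g.comp (inclCM h)).Homotopic (ContinuousMap.id _)

lemma hequiv_refl (K : Geometry.SimplicialComplex ℝ E) : HEquivIncl K K := by
  have hi : (inclCM (subset_rfl : K.space ⊆ K.space)) = ContinuousMap.id _ :=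
    ContinuousMap.ext fun x => rfl
  refine ⟨subset_rfl, ContinuousMap.id _, ?_, ?_⟩
  · rw [hi, ContinuousMap.id_comp]
  · rw [hi, ContinuousMap.id_comp]

lemma hequiv_trans {K L M : Geometry.SimplicialComplex ℝ E}
    (h1 : HEquivIncl K L) (h2 : HEquivIncl L M) : HEquivIncl K M := by
  obtain ⟨s1, g1, h11, h12⟩ := h1
  obtain ⟨s2, g2, h21, h22⟩ := h2
  refine ⟨s2.trans s1, g2.comp g1, ?_, ?_⟩
  · have hi : inclCM (s2.trans s1) = (inclCM s1).comp (inclCM s2) :=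
      ContinuousMap.ext fun x => rfl
    rw [hi]
    have e1 : ((inclCM s1).comp (inclCM s2)).comp (g2.comp g1)
        = (inclCM s1).comp (((inclCM s2).comp g2).comp g1) := by ext x; rfl
    rw [e1]
    have h' := (ContinuousMap.Homotopic.refl (inclCM s1)).comp
      (h21.comp (ContinuousMap.Homotopic.refl g1))
    rw [ContinuousMap.id_comp] at h'
    exact h'.trans h11
  · have hi : inclCM (s2.trans s1) = (inclCM s1).comp (inclCM s2) :=
      ContinuousMap.ext fun x => rfl
    rw [hi]
    have e1 : (g2.comp g1).comp ((inclCM s1).comp (inclCM s2))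
        = g2.comp ((g1.comp (inclCM s1)).comp (inclCM s2)) := by ext x; rfl
    rw [e1]
    have h' := ((ContinuousMap.Homotopic.refl g2).comp
      (h12.comp (ContinuousMap.Homotopic.refl (inclCM s2))))
    rw [ContinuousMap.id_comp] at h'
    exact h'.trans h22

lemma glueCont {α β : Type*} [TopologicalSpace α] [TopologicalSpace β]
    {S T : Set α} (hS : IsClosed S) (hT : IsClosed T) {f g : α → β}
    (hf : Continuous f) (hg : Continuous g) (hfg : ∀ x ∈ S ∩ T, f x = g x) :
    ContinuousOn (fun x => if x ∈ S then f x else g x) (S ∪ T) := by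
  intro x hx
  apply continuousWithinAt_union.2
  constructor
  · by_cases hxS : x ∈ S
    · exact (hf.continuousWithinAt).congr (fun y hy => if_pos hy) (if_pos hxS)
    · exact continuousWithinAt_of_notMem_closure (by rwa [hS.closure_eq])
  · by_cases hxT : x ∈ T
    · have key : ∀ y ∈ T, (if y ∈ S then f y else g y) = g y := fun y hy => by
        by_cases h : y ∈ S
        · rw [if_pos h]; exact hfg y ⟨h, hy⟩
        · rw [if_neg h]
      exact (hg.continuousWithinAt).congr key (key x hxT)
    · exact continuousWithinAt_of_notMem_closure (by rwa [hT.closure_eq])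

lemma contInf' {ι : Type*} {s : Finset ι} (hs : s.Nonempty) {f : ι → E → ℝ}
    (hf : ∀ i ∈ s, Continuous (f i)) : Continuous fun x => s.inf' hs (f · x) := by
  rw [continuous_iff_continuousAt]
  intro x
  exact ContinuousAt.finset_inf'_apply hs (fun i hi => (hf i hi).continuousAt)

set_option maxHeartbeats 2000000 in
lemma elem_step (K L : Geometry.SimplicialComplex ℝ E) (hfin : K.faces.Finite)
    {σ τ : Finset E} (hσK : σ ∈ K.faces) (hτK : τ ∈ K.faces) (hστ : σ ⊂ τ)
    (huniq : ∀ υ ∈ K.faces, σ ⊂ υ → υ = τ)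
    (hLf : L.faces = K.faces \ {σ, τ}) : HEquivIncl K L := by
  classical
  -- basic combinatorial facts
  have hσne : σ.Nonempty := Finset.nonempty_iff_ne_empty.2 (fun h => K.empty_notMem (h ▸ hσK))
  obtain ⟨v, hvτ, hvσ⟩ := Finset.exists_of_ssubset hστ
  have hτv : τ = insert v σ := by
    have h1 : insert v σ ∈ K.faces :=
      K.down_closed hτK (Finset.insert_subset hvτ hστ.subset) (Finset.insert_nonempty _ _)
    exact (huniq _ h1 (Finset.ssubset_insert hvσ)).symm
  have hLK : L.faces ⊆ K.faces := by rw [hLf]; exact Set.diff_subset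
  have hsub : L.space ⊆ K.space := by
    apply Set.iUnion₂_subset
    intro s hs
    exact Geometry.SimplicialComplex.convexHull_subset_space (hLK hs)
  have hKsp : K.space = L.space ∪ convexHull ℝ (τ : Set E) := by
    apply Set.Subset.antisymm
    · intro x hx
      rw [Geometry.SimplicialComplex.mem_space_iff] at hx
      obtain ⟨s, hs, hxs⟩ := hx
      by_cases h1 : s = σ
      · exact Or.inr (convexHull_mono (by exact_mod_cast hστ.subset) (h1 ▸ hxs))
      by_cases h2 : s = τ
      · exact Or.inr (h2 ▸ hxs)
      · exact Or.inl (Geometry.SimplicialComplex.mem_space_iff.2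
          ⟨s, by rw [hLf]; exact ⟨hs, by simp [h1, h2]⟩, hxs⟩)
    · exact Set.union_subset hsub (Geometry.SimplicialComplex.convexHull_subset_space hτK)
  have hScl : IsClosed L.space :=
    (hfin.subset hLK).isClosed_biUnion
      (fun s _ => (s.finite_toSet.isCompact_convexHull ℝ).isClosed)
  have hTcl : IsClosed (convexHull ℝ (τ : Set E)) :=
    (τ.finite_toSet.isCompact_convexHull ℝ).isClosed
  have heraseL : ∀ j₀ ∈ σ, τ.erase j₀ ∈ L.faces := by
    intro j₀ hj₀
    have hvne : v ∈ τ.erase j₀ := Finset.mem_erase.2 ⟨fun h => hvσ (h ▸ hj₀), hvτ⟩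
    rw [hLf]
    refine ⟨K.down_closed hτK (Finset.erase_subset _ _) ⟨v, hvne⟩, ?_⟩
    intro hmem
    simp only [Set.mem_insert_iff, Set.mem_singleton_iff] at hmem
    rcases hmem with h | h
    · exact Finset.notMem_erase j₀ τ (h.symm ▸ hj₀)
    · exact Finset.notMem_erase j₀ τ (h.symm ▸ hστ.subset hj₀)
  -- affine basis extending τ, barycentric coordinates
  obtain ⟨t, hτt, hti, htt⟩ :=
    exists_subset_affineIndependent_affineSpan_eq_top (K.indep hτK)
  have htτ : ∀ {j : E}, j ∈ τ → j ∈ t := fun hj => hτt (Finset.mem_coe.mpr hj)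
  let b : AffineBasis t ℝ E := ⟨fun p => p.1, hti, by rwa [Subtype.range_coe]⟩
  have hb : ∀ p : t, b p = p.1 := fun p => rfl
  let c : E → E → ℝ := fun j x => if hj : j ∈ t then b.coord ⟨j, hj⟩ x else 0
  have hccont : ∀ j ∈ τ, Continuous (c j) := by
    intro j hj
    have hjt := htτ hj
    simp only [c, dif_pos hjt]
    exact (b.coord ⟨j, hjt⟩).continuous_of_finiteDimensional
  -- coordinates of a weighted combination
  have hcoordw : ∀ w : E → ℝ, ∑ j ∈ τ, w j = 1 →
      ∀ j ∈ τ, c j (∑ i ∈ τ, w i • i) = w j := by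
    intro w hw1 j hj
    have hinj : Function.Injective (fun i : {x // x ∈ τ} => (⟨i.1, htτ i.2⟩ : t)) := by
      intro a b hab
      exact Subtype.ext (congrArg (fun p : t => (p : E)) hab)
    set τ' : Finset t := τ.attach.map ⟨_, hinj⟩ with hτ'
    have hsumR : ∀ u : E → ℝ, ∑ p ∈ τ', u p.1 = ∑ j ∈ τ, u j := by
      intro u
      rw [Finset.sum_map]
      exact Finset.sum_attach τ u
    have hsumE : ∀ u : E → E, ∑ p ∈ τ', u p.1 = ∑ j ∈ τ, u j := by
      intro u
      rw [Finset.sum_map]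
      exact Finset.sum_attach τ u
    have h1 : ∑ p ∈ τ', w p.1 = 1 := (hsumR w).trans hw1
    have hcomb : τ'.affineCombination ℝ (b : t → E) (fun p => w p.1) = ∑ i ∈ τ, w i • i := by
      rw [Finset.affineCombination_eq_linear_combination _ _ _ h1]
      simp only [hb]
      exact hsumE (fun j => w j • j)
    have hj' : (⟨j, htτ hj⟩ : t) ∈ τ' :=
      Finset.mem_map.2 ⟨⟨j, hj⟩, Finset.mem_attach _ _, rfl⟩
    have hco := b.coord_apply_combination_of_mem hj' h1
    rw [hcomb] at hco
    simp only [c, dif_pos (htτ hj)]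
    exact hco
  -- representation of hull points
  have hhull : ∀ x ∈ convexHull ℝ (τ : Set E), ∃ w : E → ℝ,
      (∀ j ∈ τ, 0 ≤ w j) ∧ ∑ j ∈ τ, w j = 1 ∧ ∑ j ∈ τ, w j • j = x ∧
      ∀ j ∈ τ, c j x = w j := by
    intro x hx
    rw [Finset.convexHull_eq] at hx
    obtain ⟨w, hw0, hw1, hwx⟩ := hx
    rw [Finset.centerMass_eq_of_sum_1 _ _ hw1] at hwx
    simp only [id] at hwx
    exact ⟨w, hw0, hw1, hwx, fun j hj => by rw [← hwx]; exact hcoordw w hw1 j hj⟩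
  have hmemhull : ∀ (τ'' : Finset E) (w : E → ℝ), (∀ j ∈ τ'', 0 ≤ w j) →
      ∑ j ∈ τ'', w j = 1 → (∑ j ∈ τ'', w j • j) ∈ convexHull ℝ (τ'' : Set E) := by
    intro τ'' w h0 h1
    rw [Finset.convexHull_eq]
    exact ⟨w, h0, h1, by rw [Finset.centerMass_eq_of_sum_1 _ _ h1]; simp⟩
  have hczero : ∀ j₀ ∈ τ, ∀ x ∈ convexHull ℝ ((τ.erase j₀ : Finset E) : Set E), c j₀ x = 0 := by
    intro j₀ hj₀ x hx
    rw [Finset.convexHull_eq] at hx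
    obtain ⟨w, hw0, hw1, hwx⟩ := hx
    rw [Finset.centerMass_eq_of_sum_1 _ _ hw1] at hwx
    simp only [id] at hwx
    set w' : E → ℝ := fun j => if j = j₀ then 0 else w j with hw'd
    have hsum : ∑ j ∈ τ, w' j = 1 := by
      rw [← Finset.add_sum_erase _ _ hj₀]
      simp only [w', if_pos rfl, zero_add]
      rw [← hw1]
      exact Finset.sum_congr rfl fun j hj => if_neg (Finset.ne_of_mem_erase hj)
    have hxsum : ∑ j ∈ τ, w' j • j = x := by
      rw [← Finset.add_sum_erase _ _ hj₀]
      simp only [w', if_pos rfl, zero_smul, zero_add]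
      rw [← hwx]
      exact Finset.sum_congr rfl fun j hj => by
        rw [if_neg (Finset.ne_of_mem_erase hj)]
    have hc := hcoordw w' hsum j₀ hj₀
    rw [hxsum] at hc
    rw [hc]
    simp [w']
  -- numeric setup
  have hk0 : (0:ℝ) < (σ.card : ℝ) := by exact_mod_cast hσne.card_pos
  set k : ℝ := (σ.card : ℝ) with hkdef
  let qw : E → ℝ := fun j => if j ∈ σ then 2 / k else -1
  let q : E := ∑ j ∈ τ, qw j • j
  have hqσ : ∀ j ∈ σ, qw j = 2 / k := fun j hj => if_pos hj
  have hqv : qw v = -1 := if_neg hvσ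
  have hk2 : k * (2 / k) = 2 := by field_simp
  have hqsum : ∑ j ∈ τ, qw j = 1 := by
    rw [hτv, Finset.sum_insert hvσ, hqv, Finset.sum_congr rfl hqσ, Finset.sum_const,
      nsmul_eq_mul, ← hkdef, hk2]
    ring
  obtain ⟨μ, hμdef⟩ : ∃ f : E → ℝ, f = fun x => σ.inf' hσne fun i => c i x := ⟨_, rfl⟩
  obtain ⟨ν, hνdef⟩ : ∃ f : E → ℝ, f = fun x => min (μ x) (1 / k) := ⟨_, rfl⟩
  obtain ⟨sfun, hsdef⟩ : ∃ f : E → ℝ, f = fun x => 2 / (2 - k * ν x) := ⟨_, rfl⟩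
  have hμeval : ∀ x, μ x = σ.inf' hσne fun i => c i x := fun x => by rw [hμdef]
  have hνeval : ∀ x, ν x = min (μ x) (1 / k) := fun x => by rw [hνdef]
  have hseval : ∀ x, sfun x = 2 / (2 - k * ν x) := fun x => by rw [hsdef]
  have hν1k : ∀ x, ν x ≤ 1 / k := fun x => by rw [hνeval]; exact min_le_right _ _
  have hdpos : ∀ x, 0 < 2 - k * ν x := by
    intro x
    have h1 : k * ν x ≤ k * (1 / k) := mul_le_mul_of_nonneg_left (hν1k x) hk0.le
    rw [mul_one_div, div_self hk0.ne'] at h1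
    linarith
  have hμcont : Continuous μ := by
    rw [hμdef]; exact contInf' hσne (fun i hi => hccont i (hστ.subset hi))
  have hνcont : Continuous ν := by rw [hνdef]; exact hμcont.min continuous_const
  have hscont : Continuous sfun := by
    rw [hsdef]
    exact continuous_const.div (continuous_const.sub (continuous_const.mul hνcont))
      (fun x => (hdpos x).ne')
  have hμle : ∀ x, ∀ i ∈ σ, μ x ≤ c i x := fun x i hi => by
    rw [hμeval]; exact Finset.inf'_le _ hi
  have hμ0 : ∀ x ∈ convexHull ℝ (τ : Set E), 0 ≤ μ x := by
    intro x hx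
    obtain ⟨w, hw0, _, _, hcw⟩ := hhull x hx
    rw [hμeval]
    exact Finset.le_inf' _ _ fun i hi => by
      rw [hcw i (hστ.subset hi)]; exact hw0 i (hστ.subset hi)
  have hνμ : ∀ x ∈ convexHull ℝ (τ : Set E), ν x = μ x := by
    intro x hx
    obtain ⟨w, hw0, hw1, _, hcw⟩ := hhull x hx
    have hsσ : ∑ i ∈ σ, w i ≤ 1 := by
      rw [← hw1]
      exact Finset.sum_le_sum_of_subset_of_nonneg hστ.subset (fun j hj _ => hw0 j hj)
    have hksum : k * μ x ≤ ∑ i ∈ σ, w i := by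
      calc k * μ x = ∑ _i ∈ σ, μ x := by rw [Finset.sum_const, nsmul_eq_mul, ← hkdef]
      _ ≤ ∑ i ∈ σ, w i := Finset.sum_le_sum fun i hi => by
          rw [← hcw i (hστ.subset hi)]; exact hμle x i hi
    have hμ1k : μ x ≤ 1 / k := by
      rw [le_div_iff₀ hk0]
      nlinarith
    rw [hνeval]
    exact min_eq_left hμ1k
  have hs1 : ∀ x ∈ convexHull ℝ (τ : Set E), 1 ≤ sfun x := by
    intro x hx
    have h0 : 0 ≤ ν x := by rw [hνμ x hx]; exact hμ0 x hx
    have hd := hdpos x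
    rw [hseval, le_div_iff₀ hd]
    nlinarith [mul_nonneg hk0.le h0]
  have hcomb2 : ∀ (w : E → ℝ) (x : E), ∑ j ∈ τ, w j = 1 → ∑ j ∈ τ, w j • j = x →
      ∀ r : ℝ, (∑ j ∈ τ, (r * w j + (1 - r) * qw j) = 1) ∧
        ∑ j ∈ τ, (r * w j + (1 - r) * qw j) • j = x + (r - 1) • (x - q) := by
    intro w x hw1 hwx r
    constructor
    · rw [Finset.sum_add_distrib, ← Finset.mul_sum, ← Finset.mul_sum, hw1, hqsum]
      ring
    · have h1 : ∑ j ∈ τ, (r * w j + (1 - r) * qw j) • j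
          = r • ∑ j ∈ τ, w j • j + (1 - r) • ∑ j ∈ τ, qw j • j := by
        rw [Finset.smul_sum, Finset.smul_sum, ← Finset.sum_add_distrib]
        exact Finset.sum_congr rfl fun j _ => by
          rw [add_smul, smul_smul, smul_smul]
      rw [h1, hwx]
      show r • x + (1 - r) • q = x + (r - 1) • (x - q)
      module
  have hnn : ∀ x ∈ convexHull ℝ (τ : Set E), ∀ w : E → ℝ, (∀ j ∈ τ, 0 ≤ w j) →
      (∀ j ∈ τ, c j x = w j) → ∀ r : ℝ, 1 ≤ r → r ≤ sfun x →
      ∀ j ∈ τ, 0 ≤ r * w j + (1 - r) * qw j := by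
    intro x hx w hw0 hcw r hr1 hr2 j hj
    have hd := hdpos x
    have hν0 : 0 ≤ ν x := by rw [hνμ x hx]; exact hμ0 x hx
    by_cases hjσ : j ∈ σ
    · simp only [qw, if_pos hjσ]
      have hμw : ν x ≤ w j := by
        rw [hνμ x hx, ← hcw j hj]; exact hμle x j hjσ
      by_cases hc2 : 2 / k ≤ w j
      · nlinarith [hw0 j hj]
      · push_neg at hc2
        have h1 : 0 ≤ sfun x * w j + (1 - sfun x) * (2 / k) := by
          rw [hseval]
          have key : 2 / (2 - k * ν x) * w j + (1 - 2 / (2 - k * ν x)) * (2 / k)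
              = (2 * w j - 2 * ν x) / (2 - k * ν x) := by
            field_simp [hd.ne', hk0.ne']
            ring
          rw [key]
          apply div_nonneg _ hd.le
          linarith
        nlinarith [mul_nonneg (sub_nonneg.2 hr2) (by linarith : (0:ℝ) ≤ 2 / k - w j)]
    · simp only [qw, if_neg hjσ]
      have hwj := hw0 j hj
      nlinarith [mul_nonneg (by linarith : (0:ℝ) ≤ r) hwj]
  have hvanish : ∀ x ∈ convexHull ℝ (τ : Set E), ∀ w : E → ℝ, (∀ j ∈ τ, c j x = w j) →
      ∃ j₀ ∈ σ, sfun x * w j₀ + (1 - sfun x) * qw j₀ = 0 := by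
    intro x hx w hcw
    obtain ⟨i₀, hi₀, hμeq⟩ := Finset.exists_mem_eq_inf' hσne (fun i => c i x)
    refine ⟨i₀, hi₀, ?_⟩
    have hwi : w i₀ = ν x := by
      rw [hνμ x hx, ← hcw i₀ (hστ.subset hi₀), hμeval]
      exact hμeq.symm
    simp only [qw, if_pos hi₀]
    rw [hwi]
    have hd := hdpos x
    rw [hseval]
    field_simp [hd.ne', hk0.ne']
    ring
  have hfhull : ∀ x ∈ convexHull ℝ (τ : Set E), ∃ j₀ ∈ σ,
      x + (sfun x - 1) • (x - q) ∈ convexHull ℝ ((τ.erase j₀ : Finset E) : Set E) := by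
    intro x hx
    obtain ⟨w, hw0, hw1, hwx, hcw⟩ := hhull x hx
    obtain ⟨j₀, hj₀σ, hzero⟩ := hvanish x hx w hcw
    have hj₀τ : j₀ ∈ τ := hστ.subset hj₀σ
    refine ⟨j₀, hj₀σ, ?_⟩
    obtain ⟨hsum1, hcombx⟩ := hcomb2 w x hw1 hwx (sfun x)
    have hnn' := hnn x hx w hw0 hcw (sfun x) (hs1 x hx) le_rfl
    have hesum : ∑ j ∈ τ.erase j₀, (sfun x * w j + (1 - sfun x) * qw j) = 1 := by
      have h := Finset.add_sum_erase τ (fun j => sfun x * w j + (1 - sfun x) * qw j) hj₀τ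
      simp only [hsum1, hzero, zero_add] at h
      exact h
    have hecomb : ∑ j ∈ τ.erase j₀, (sfun x * w j + (1 - sfun x) * qw j) • j
        = x + (sfun x - 1) • (x - q) := by
      have h := Finset.add_sum_erase τ
        (fun j => (sfun x * w j + (1 - sfun x) * qw j) • j) hj₀τ
      simp only [hcombx, hzero, zero_smul, zero_add] at h
      exact h
    rw [← hecomb]
    exact hmemhull _ _ (fun j hj => hnn' j (Finset.mem_of_mem_erase hj)) hesum
  have hHhull : ∀ u : ℝ, 0 ≤ u → u ≤ 1 → ∀ x ∈ convexHull ℝ (τ : Set E),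
      x + (u * (sfun x - 1)) • (x - q) ∈ convexHull ℝ (τ : Set E) := by
    intro u hu0 hu1 x hx
    obtain ⟨w, hw0, hw1, hwx, hcw⟩ := hhull x hx
    have hs1x := hs1 x hx
    have hr1 : 1 ≤ 1 + u * (sfun x - 1) := by nlinarith
    have hr2 : 1 + u * (sfun x - 1) ≤ sfun x := by nlinarith
    obtain ⟨hsum1, hcombx⟩ := hcomb2 w x hw1 hwx (1 + u * (sfun x - 1))
    have hrr : (1 + u * (sfun x - 1)) - 1 = u * (sfun x - 1) := by ring
    rw [hrr] at hcombx
    rw [← hcombx]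
    exact hmemhull _ _ (hnn x hx w hw0 hcw _ hr1 hr2) hsum1
  have hfixs : ∀ x, x ∈ L.space → x ∈ convexHull ℝ (τ : Set E) → sfun x = 1 := by
    intro x hxL hxτ
    obtain ⟨η, hηL, hxη⟩ := Geometry.SimplicialComplex.mem_space_iff.1 hxL
    have hηK : η ∈ K.faces := hLK hηL
    obtain ⟨j₀, hj₀σ, hj₀η⟩ : ∃ j₀ ∈ σ, j₀ ∉ η := by
      by_contra hcon
      push_neg at hcon
      rcases eq_or_ne σ η with h | h
      · rw [hLf] at hηL; exact hηL.2 (by simp [← h])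
      · have hητ : η = τ := huniq η hηK (ssubset_of_subset_of_ne hcon h)
        rw [hLf, hητ] at hηL
        exact hηL.2 (by simp)
    have hint : x ∈ convexHull ℝ ((η : Set E) ∩ (τ : Set E)) :=
      K.inter_subset_convexHull hηK hτK ⟨hxη, hxτ⟩
    have hsub2 : (η : Set E) ∩ (τ : Set E) ⊆ ((τ.erase j₀ : Finset E) : Set E) := by
      intro y hy
      rcases hy with ⟨hyη, hyτ⟩
      refine Finset.mem_coe.2 (Finset.mem_erase.2 ⟨?_, Finset.mem_coe.1 hyτ⟩)
      rintro rfl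
      exact hj₀η (Finset.mem_coe.1 hyη)
    have hc0 : c j₀ x = 0 := hczero j₀ (hστ.subset hj₀σ) x (convexHull_mono hsub2 hint)
    have hμx : μ x = 0 :=
      le_antisymm (by rw [← hc0]; exact hμle x j₀ hj₀σ) (hμ0 x hxτ)
    have hνx : ν x = 0 := by rw [hνμ x hxτ, hμx]
    rw [hseval, hνx]
    norm_num
  -- the retraction and gluing
  let f : E → E := fun x => x + (sfun x - 1) • (x - q)
  have hfcont : Continuous f :=
    continuous_id.add ((hscont.sub continuous_const).smul (continuous_id.sub continuous_const))
  let φ : E → E := fun y => if y ∈ L.space then y else f y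
  have hfL : ∀ x ∈ convexHull ℝ (τ : Set E), f x ∈ L.space := by
    intro x hx
    obtain ⟨j₀, hj₀σ, hmem⟩ := hfhull x hx
    exact Geometry.SimplicialComplex.convexHull_subset_space (heraseL j₀ hj₀σ) hmem
  have hfixf : ∀ x, x ∈ L.space → x ∈ convexHull ℝ (τ : Set E) → f x = x := by
    intro x h1 h2
    show x + (sfun x - 1) • (x - q) = x
    rw [hfixs x h1 h2]
    simp
  have hφK : ∀ y ∈ K.space, φ y ∈ L.space := by
    intro y hy
    by_cases h : y ∈ L.space
    · simp only [φ, if_pos h]; exact h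
    · have hyτ : y ∈ convexHull ℝ (τ : Set E) := by
        rw [hKsp] at hy
        rcases hy with h' | h'
        · exact absurd h' h
        · exact h'
      simp only [φ, if_neg h]
      exact hfL y hyτ
  have hφcont : ContinuousOn φ K.space := by
    rw [hKsp]
    exact glueCont hScl hTcl continuous_id hfcont (fun x hx => (hfixf x hx.1 hx.2).symm)
  let g : C(K.space, L.space) :=
    ⟨fun x => ⟨φ x.1, hφK x.1 x.2⟩, by
      apply Continuous.subtype_mk
      exact hφcont.restrict⟩
  refine ⟨hsub, g, ?_, ?_⟩
  · -- the straight-line homotopy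
    let Ψ : ℝ × E → E := fun p =>
      if p.2 ∈ L.space then p.2 else p.2 + (p.1 * (sfun p.2 - 1)) • (p.2 - q)
    have hGcont : Continuous fun p : ℝ × E =>
        p.2 + (p.1 * (sfun p.2 - 1)) • (p.2 - q) := by
      apply continuous_snd.add
      apply Continuous.smul
      · exact continuous_fst.mul ((hscont.comp continuous_snd).sub continuous_const)
      · exact continuous_snd.sub continuous_const
    have hΨcont : ContinuousOn Ψ
        ((Prod.snd ⁻¹' L.space) ∪ (Prod.snd ⁻¹' (convexHull ℝ (τ : Set E)))) := by
      exact glueCont (hScl.preimage continuous_snd) (hTcl.preimage continuous_snd)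
        continuous_snd hGcont
        (fun p hp => by
          have h1 := hfixs p.2 hp.1 hp.2
          rw [h1]
          simp)
    have hΨK : ∀ u : ℝ, 0 ≤ u → u ≤ 1 → ∀ y ∈ K.space, Ψ (u, y) ∈ K.space := by
      intro u h0 h1 y hy
      by_cases h : y ∈ L.space
      · simp only [Ψ, if_pos h]
        exact hsub h
      · have hyτ : y ∈ convexHull ℝ (τ : Set E) := by
          rw [hKsp] at hy
          rcases hy with h' | h'
          · exact absurd h' h
          · exact h'
        simp only [Ψ, if_neg h]
        exact Geometry.SimplicialComplex.convexHull_subset_space hτK (hHhull u h0 h1 y hyτ)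
    have hmemH : ∀ (u : unitInterval) (x : K.space),
        Ψ (1 - (u : ℝ), (x : E)) ∈ K.space := fun u x =>
      hΨK _ (by linarith [u.2.2]) (by linarith [u.2.1]) _ x.2
    refine ⟨{ toFun := fun p => ⟨Ψ (1 - (p.1 : ℝ), (p.2 : E)), hmemH p.1 p.2⟩,
               continuous_toFun := ?_,
               map_zero_left := ?_,
               map_one_left := ?_ }⟩
    · apply Continuous.subtype_mk
      apply hΨcont.comp_continuous
      · exact (continuous_const.sub (continuous_subtype_val.comp continuous_fst)).prodMk
          (continuous_subtype_val.comp continuous_snd)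
      · intro p
        have hp : (p.2 : E) ∈ L.space ∪ convexHull ℝ (τ : Set E) := by
          rw [← hKsp]
          exact p.2.2
        rcases hp with h | h
        · exact Or.inl h
        · exact Or.inr h
    · intro x
      apply Subtype.ext
      show Ψ (1 - ((0 : unitInterval) : ℝ), (x : E)) = φ (x : E)
      rw [Set.Icc.coe_zero, sub_zero]
      by_cases h : (x : E) ∈ L.space
      · simp only [Ψ, φ, if_pos h]
      · simp only [Ψ, φ, f, if_neg h, one_mul]
    · intro x
      apply Subtype.ext
      show Ψ (1 - ((1 : unitInterval) : ℝ), (x : E)) = (x : E)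
      rw [Set.Icc.coe_one, sub_self]
      by_cases h : (x : E) ∈ L.space
      · simp only [Ψ, if_pos h]
      · simp only [Ψ, if_neg h, zero_mul, zero_smul, add_zero]
  · have hgid : g.comp (inclCM hsub) = ContinuousMap.id _ := by
      apply ContinuousMap.ext
      intro y
      apply Subtype.ext
      show φ (y : E) = (y : E)
      simp only [φ, if_pos y.2]
    rw [hgid]

end

/-- If a finite simplicial complex `K` collapses to a subcomplex `L`, then the inclusion
`L ↪ K` (of underlying spaces) is a homotopy equivalence. -/
theorem collapse_inclusion_homotopyEquiv {m : ℕ}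
    (K L : Geometry.SimplicialComplex ℝ (EuclideanSpace ℝ (Fin m)))
    (hfin : K.faces.Finite)
    (hcol : CollapsesTo K L)
    (hsub : L.space ⊆ K.space) :
    ∃ g : C(K.space, L.space),
      (ContinuousMap.Homotopic
        (((⟨Set.inclusion hsub, continuous_inclusion hsub⟩ : C(L.space, K.space))).comp g)
        (ContinuousMap.id K.space)) ∧
      (ContinuousMap.Homotopic
        (g.comp (⟨Set.inclusion hsub, continuous_inclusion hsub⟩ : C(L.space, K.space)))
        (ContinuousMap.id L.space)) := by
  have hcol' : Relation.ReflTransGen (fun A B => ElemCollapse A B) K L := hcol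
  have key : HEquivIncl K L ∧ L.faces ⊆ K.faces := by
    clear hsub hcol
    induction hcol' with
    | refl => exact ⟨hequiv_refl K, subset_rfl⟩
    | @tail B C hKB hBC ih =>
        obtain ⟨σ, τ, hσK, hτK, hστ, huniq, hLf⟩ := hBC
        refine ⟨hequiv_trans ih.1
          (elem_step B C (hfin.subset ih.2) hσK hτK hστ huniq hLf), ?_⟩
        exact (by rw [hLf]; exact Set.diff_subset : C.faces ⊆ B.faces).trans ih.2
  obtain ⟨hs, g, h1, h2⟩ := key.1
  exact ⟨g, h1, h2⟩
end

section
/- Let V be a discrete vector field on a finite simplicial complex K and fix a vertex x of K. If every pair of V has the form (σ, σ ∪ {x}) with x ∉ σ, then V is a gradient vector field, i.e., the directed graph obtained from the Hasse diagram of K by reversing the edges in V is acyclic. -/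
variable {V : Type*} [DecidableEq V]

/-- `σ` is a facet (codimension-1 face) of `τ`. -/
def IsFacet (σ τ : Finset V) : Prop := σ ⊆ τ ∧ σ.card + 1 = τ.card

/-- A discrete vector field on a simplicial complex `K`: a set of pairs `(σ, τ)` with `σ` a
facet of `τ`, both in `K`, such that each simplex of `K` occurs in at most one pair. -/
def IsVectorField (K : Set (Finset V)) (Vf : Set (Finset V × Finset V)) : Prop :=
  (∀ p ∈ Vf, p.1 ∈ K ∧ p.2 ∈ K ∧ IsFacet p.1 p.2) ∧
  (∀ p ∈ Vf, ∀ q ∈ Vf,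
    (p.1 = q.1 ∨ p.1 = q.2 ∨ p.2 = q.1 ∨ p.2 = q.2) → p = q)

/-- The edge relation of the Hasse diagram of `K` with the edges of `Vf` reversed. -/
def ModifiedHasse (K : Set (Finset V)) (Vf : Set (Finset V × Finset V))
    (a b : Finset V) : Prop :=
  (a ∈ K ∧ b ∈ K ∧ IsFacet a b ∧ (a, b) ∉ Vf) ∨ (b, a) ∈ Vf

/-- `Vf` is a gradient vector field: the directed graph obtained from the Hasse diagram of `K`
by reversing the edges of `Vf` is acyclic. -/
def IsGradient (K : Set (Finset V)) (Vf : Set (Finset V × Finset V)) : Prop :=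
  ∀ a : Finset V, ¬ Relation.TransGen (ModifiedHasse K Vf) a a


open Classical in
/-- Weight that strictly increases along every edge of the modified Hasse diagram. -/
noncomputable def mweight (Vf : Set (Finset V × Finset V)) (x : V) (a : Finset V) : ℕ :=
  3 * (a.erase x).card + (if x ∈ a then 1 else if (a, insert x a) ∈ Vf then 2 else 0)

theorem mweight_lt_of_modifiedHasse (K : Set (Finset V)) (Vf : Set (Finset V × Finset V))
    (x : V) (hpairs : ∀ p ∈ Vf, x ∉ p.1 ∧ p.2 = insert x p.1)
    {a b : Finset V} (h : ModifiedHasse K Vf a b) :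
    mweight Vf x a < mweight Vf x b := by
  classical
  rcases h with ⟨-, -, ⟨hsub, hcard⟩, hnot⟩ | hba
  · by_cases hxa : x ∈ a
    · have hxb : x ∈ b := hsub hxa
      have h1 : (a.erase x).card + 1 = a.card := Finset.card_erase_add_one hxa
      have h2 : (b.erase x).card + 1 = b.card := Finset.card_erase_add_one hxb
      have : (a.erase x).card < (b.erase x).card := by omega
      simp only [mweight, if_pos hxa, if_pos hxb]
      omega
    · by_cases hxb : x ∈ b
      · have hins : insert x a ⊆ b := Finset.insert_subset hxb hsub
        have hcardi : (insert x a).card = b.card := by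
          rw [Finset.card_insert_of_notMem hxa]; omega
        have hb : b = insert x a :=
          (Finset.eq_of_subset_of_card_le hins (le_of_eq hcardi.symm)).symm
        have hea : a.erase x = a := Finset.erase_eq_of_notMem hxa
        have heb : b.erase x = a := by rw [hb, Finset.erase_insert hxa]
        have hvnot : (a, insert x a) ∉ Vf := by rwa [← hb]
        simp only [mweight, if_neg hxa, if_pos hxb, if_neg hvnot, hea, heb]
        omega
      · have hea : a.erase x = a := Finset.erase_eq_of_notMem hxa
        have heb : b.erase x = b := Finset.erase_eq_of_notMem hxb
        simp only [mweight, if_neg hxa, if_neg hxb, hea, heb]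
        split <;> split <;> omega
  · obtain ⟨hxb, ha⟩ := hpairs _ hba
    replace hxb : x ∉ b := hxb
    replace ha : a = insert x b := ha
    have hxa : x ∈ a := by rw [ha]; exact Finset.mem_insert_self x b
    have hea : a.erase x = b := by rw [ha, Finset.erase_insert hxb]
    have heb : b.erase x = b := Finset.erase_eq_of_notMem hxb
    have hv : (b, insert x b) ∈ Vf := by rwa [← ha]
    simp only [mweight, if_pos hxa, if_neg hxb, if_pos hv, hea, heb]
    omega

/-- If every pair of a discrete vector field `Vf` on a finite simplicial complex `K` has the
form `(σ, σ ∪ {x})` for a fixed vertex `x` (with `x ∉ σ`), then `Vf` is a gradient. -/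
theorem vectorField_insert_vertex_isGradient
    (K : Set (Finset V)) (hK : K.Finite)
    (hcomplex : ∀ σ ∈ K, ∀ τ : Finset V, τ ⊆ σ → τ.Nonempty → τ ∈ K)
    (Vf : Set (Finset V × Finset V)) (hVf : IsVectorField K Vf)
    (x : V) (hx : {x} ∈ K)
    (hpairs : ∀ p ∈ Vf, x ∉ p.1 ∧ p.2 = insert x p.1) :
    IsGradient K Vf := by
  have key : ∀ a b : Finset V, Relation.TransGen (ModifiedHasse K Vf) a b →
      mweight Vf x a < mweight Vf x b := by
    intro a b h
    induction h with
    | single h' => exact mweight_lt_of_modifiedHasse K Vf x hpairs h'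
    | tail _ h' ih => exact lt_trans ih (mweight_lt_of_modifiedHasse K Vf x hpairs h')
  exact fun a h => lt_irrefl _ (key a a h)
end

section
/- The (d+1)-dimensional simplices of the incremental Delaunay complex I(X) are in bijection with conflict pairs: a set σ ∪ {x_{i+1}} with σ a d-simplex of Del(X_i) is a (d+1)-simplex of I(X) if and only if x_{i+1} lies strictly inside the circumsphere of σ, and every (d+1)-simplex of I(X) arises this way. -/
open Finset

def GenPos {d n : ℕ} (x : Fin n → EuclideanSpace ℝ (Fin d)) : Prop :=
  ∀ s : Finset (Fin n), s.Nonempty → s.card ≤ d + 1 →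
    (AffineIndependent ℝ (fun i : s => x i)) ∧
    ∀ (c : EuclideanSpace ℝ (Fin d)) (r : ℝ),
      ((∀ i ∈ s, dist (x i) c = r) ∧
        ∀ (c' : EuclideanSpace ℝ (Fin d)) (r' : ℝ),
          (∀ i ∈ s, dist (x i) c' = r') → r ≤ r') →
      ∀ j, j ∉ s → dist (x j) c ≠ r

/-- `σ` belongs to the Delaunay triangulation of the points indexed by `Y`. -/
def DelMem {d n : ℕ} (x : Fin n → EuclideanSpace ℝ (Fin d)) (Y : Finset (Fin n))
    (σ : Finset (Fin n)) : Prop :=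
  σ.Nonempty ∧ σ ⊆ Y ∧
    ∃ (c : EuclideanSpace ℝ (Fin d)) (r : ℝ),
      (∀ i ∈ σ, dist (x i) c = r) ∧ ∀ i ∈ Y, r ≤ dist (x i) c

/-- `σ` belongs to the incremental Delaunay complex `I(X)`. -/
def IncrMem {d n : ℕ} (x : Fin n → EuclideanSpace ℝ (Fin d))
    (σ : Finset (Fin n)) : Prop :=
  ∃ h : σ.Nonempty, ∃ (c : EuclideanSpace ℝ (Fin d)) (r : ℝ),
    (∀ i ∈ σ.erase (σ.max' h), dist (x i) c = r) ∧
    dist (x (σ.max' h)) c ≤ r ∧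
    ∀ i : Fin n, i < σ.max' h → r ≤ dist (x i) c

/-- A sphere through `d+1` affinely independent points of `ℝ^d` is unique. -/
lemma sphere_unique_aux {d n : ℕ} (x : Fin n → EuclideanSpace ℝ (Fin d))
    {σ : Finset (Fin n)} (hcard : σ.card = d + 1)
    (hai : AffineIndependent ℝ (fun i : σ => x i))
    {c c' : EuclideanSpace ℝ (Fin d)} {r r' : ℝ}
    (h : ∀ i ∈ σ, dist (x i) c = r) (h' : ∀ i ∈ σ, dist (x i) c' = r') :
    c = c' ∧ r = r' := by
  have hne : σ.Nonempty := card_pos.mp (by omega)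
  haveI : Nonempty σ := hne.to_subtype
  have hspan : affineSpan ℝ (Set.range (fun i : σ => x i)) = ⊤ := by
    rw [hai.affineSpan_eq_top_iff_card_eq_finrank_add_one]
    simp [Fintype.card_coe, hcard]
  obtain ⟨s, -, huniq⟩ := hai.existsUnique_dist_eq
  have h1 : (⟨c, r⟩ : EuclideanGeometry.Sphere (EuclideanSpace ℝ (Fin d))) = s := by
    refine huniq _ ⟨by simp [hspan], ?_⟩
    rintro p ⟨i, rfl⟩
    exact h i i.2
  have h2 : (⟨c', r'⟩ : EuclideanGeometry.Sphere (EuclideanSpace ℝ (Fin d))) = s := by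
    refine huniq _ ⟨by simp [hspan], ?_⟩
    rintro p ⟨i, rfl⟩
    exact h' i i.2
  have h3 := h1.trans h2.symm
  exact ⟨congrArg EuclideanGeometry.Sphere.center h3,
    congrArg EuclideanGeometry.Sphere.radius h3⟩

/-- The `(d+1)`-simplices of `I(X)` are exactly the joins `σ ∪ {x_j}` of conflict pairs:
pairs of a `d`-simplex `σ` of the Delaunay triangulation of the points preceding `x_j`
whose circumsphere strictly contains `x_j`. -/
theorem incr_top_simplices_iff_conflict_pairs {d n : ℕ}
    (x : Fin n → EuclideanSpace ℝ (Fin d))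
    (hinj : Function.Injective x) (hgp : GenPos x) :
    (∀ (j : Fin n) (σ : Finset (Fin n)) (c : EuclideanSpace ℝ (Fin d)) (r : ℝ),
        σ.card = d + 1 →
        DelMem x (Finset.univ.filter fun i => i < j) σ →
        (∀ i ∈ σ, dist (x i) c = r) →
        (IncrMem x (insert j σ) ↔ dist (x j) c < r)) ∧
    (∀ τ : Finset (Fin n), IncrMem x τ → τ.card = d + 2 →
        ∃ (j : Fin n) (σ : Finset (Fin n)),
          τ = insert j σ ∧ j ∉ σ ∧ σ.card = d + 1 ∧
          DelMem x (Finset.univ.filter fun i => i < j) σ ∧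
          ∃ (c : EuclideanSpace ℝ (Fin d)) (r : ℝ),
            (∀ i ∈ σ, dist (x i) c = r) ∧ dist (x j) c < r) := by
  constructor
  · intro j σ c r hcard hdel hcr
    obtain ⟨hσne, hsub, c₀, r₀, hc₀, hmin⟩ := hdel
    have hlt : ∀ i ∈ σ, i < j := by
      intro i hi
      have := hsub hi
      simp only [mem_filter, mem_univ, true_and] at this
      exact this
    have hjσ : j ∉ σ := fun h => lt_irrefl j (hlt j h)
    obtain ⟨hai, hgen⟩ := hgp σ hσne (le_of_eq hcard)
    obtain ⟨hc₀c, hr₀r⟩ := sphere_unique_aux x hcard hai hc₀ hcr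
    rw [hc₀c, hr₀r] at hc₀ hmin
    -- minimality of (c, r) and strictness via general position
    have hminr : ∀ (c' : EuclideanSpace ℝ (Fin d)) (r' : ℝ),
        (∀ i ∈ σ, dist (x i) c' = r') → r ≤ r' := by
      intro c' r' h'
      exact le_of_eq (sphere_unique_aux x hcard hai hcr h').2
    have hjne : dist (x j) c ≠ r := hgen c r ⟨hcr, hminr⟩ j hjσ
    have hτne : (insert j σ).Nonempty := insert_nonempty _ _
    have hmax : ∀ hh : (insert j σ).Nonempty, (insert j σ).max' hh = j := by
      intro hh
      refine le_antisymm (max'_le _ _ _ ?_) (le_max' _ _ (mem_insert_self _ _))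
      intro i hi
      rcases mem_insert.mp hi with rfl | hi
      · exact le_refl _
      · exact le_of_lt (hlt i hi)
    constructor
    · rintro ⟨hh, c', r', h1, h2, h3⟩
      rw [hmax hh] at h1 h2
      rw [erase_insert hjσ] at h1
      obtain ⟨hcc, hrr⟩ := sphere_unique_aux x hcard hai h1 hcr
      rw [hcc, hrr] at h2
      exact lt_of_le_of_ne h2 hjne
    · intro hstrict
      refine ⟨hτne, c, r, ?_, ?_, ?_⟩
      · rw [hmax hτne, erase_insert hjσ]; exact hcr
      · rw [hmax hτne]; exact le_of_lt hstrict
      · rw [hmax hτne]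
        intro i hi
        exact hmin i (by simp [hi])
  · intro τ hτ hcard
    obtain ⟨hτne, c, r, h1, h2, h3⟩ := hτ
    set j := τ.max' hτne with hj
    set σ := τ.erase j with hσ
    have hjτ : j ∈ τ := max'_mem _ _
    have hins : τ = insert j σ := (insert_erase hjτ).symm
    have hjσ : j ∉ σ := notMem_erase _ _
    have hcardσ : σ.card = d + 1 := by
      rw [hσ, card_erase_of_mem hjτ, hcard]; omega
    have hσne : σ.Nonempty := card_pos.mp (by omega)
    have hlt : ∀ i ∈ σ, i < j := by
      intro i hi
      have hiτ : i ∈ τ := (erase_subset _ _) hi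
      exact lt_of_le_of_ne (le_max' _ _ hiτ) (ne_of_mem_erase hi)
    obtain ⟨hai, hgen⟩ := hgp σ hσne (le_of_eq hcardσ)
    have hminr : ∀ (c' : EuclideanSpace ℝ (Fin d)) (r' : ℝ),
        (∀ i ∈ σ, dist (x i) c' = r') → r ≤ r' := by
      intro c' r' h'
      exact le_of_eq (sphere_unique_aux x hcardσ hai h1 h').2
    have hjne : dist (x j) c ≠ r := hgen c r ⟨h1, hminr⟩ j hjσ
    refine ⟨j, σ, hins, hjσ, hcardσ, ⟨hσne, ?_, c, r, h1, ?_⟩, c, r, h1, lt_of_le_of_ne h2 hjne⟩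
    · intro i hi
      simp only [mem_filter, mem_univ, true_and]
      exact hlt i hi
    · intro i hi
      simp only [mem_filter, mem_univ, true_and] at hi
      exact h3 i hi
end

section
/- The incremental Delaunay complex I(X) of an ordered set of n points in general position in ℝ^d has O(n^{⌈(d+1)/2⌉}) simplices (for fixed d). -/
open Finset

namespace Incr

variable {d n : ℕ}

/-- The parameter space for "sphere functionals": `(a, b)` represents
`p ↦ ‖p‖² - 2⟨a,p⟩ + b`. -/
abbrev V (d : ℕ) := EuclideanSpace ℝ (Fin d) × ℝ

/-- Linear part of the evaluation of a sphere functional at a point `p`. -/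
noncomputable def lin (p : EuclideanSpace ℝ (Fin d)) : V d →ₗ[ℝ] ℝ where
  toFun f := f.2 - 2 * (inner ℝ p f.1 : ℝ)
  map_add' u v := by
    simp [inner_add_right]; ring
  map_smul' c u := by
    simp [inner_smul_right]; ring

/-- Evaluation of the sphere functional `f` at the point `x j`. -/
noncomputable def Fev (x : Fin n → EuclideanSpace ℝ (Fin d)) (f : V d) (j : Fin n) : ℝ :=
  (inner ℝ (x j) (x j) : ℝ) + lin (x j) f

lemma Fev_add_smul (x : Fin n → EuclideanSpace ℝ (Fin d)) (f g : V d) (t : ℝ) (j : Fin n) :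
    Fev x (f + t • g) j = Fev x f j + t * lin (x j) g := by
  simp only [Fev, map_add, map_smul, smul_eq_mul]; ring

lemma Fev_sub (x : Fin n → EuclideanSpace ℝ (Fin d)) (f g : V d) (j : Fin n) :
    Fev x f j - Fev x g j = lin (x j) (f - g) := by
  simp only [Fev, map_sub]; ring

/-- `Fev` at `f = (c, ‖c‖² - r²)` is `dist² - r²`. -/
lemma Fev_center (x : Fin n → EuclideanSpace ℝ (Fin d)) (c : EuclideanSpace ℝ (Fin d))
    (r : ℝ) (j : Fin n) :
    Fev x (c, (inner ℝ c c : ℝ) - r ^ 2) j = dist (x j) c ^ 2 - r ^ 2 := by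
  have h := @norm_sub_sq_real (EuclideanSpace ℝ (Fin d)) _ _ (x j) c
  rw [dist_eq_norm]
  simp only [Fev, lin, LinearMap.coe_mk, AddHom.coe_mk]
  rw [h]
  simp only [real_inner_self_eq_norm_sq]
  ring


section GP
variable {x : Fin n → EuclideanSpace ℝ (Fin d)}

lemma zero_of_inner_diff {s : Finset (Fin n)} (hcard : s.card = d + 1)
    (hai : AffineIndependent ℝ (fun i : s => x i))
    (α : EuclideanSpace ℝ (Fin d))
    (hα : ∀ i ∈ s, ∀ j ∈ s, (inner ℝ α (x i - x j) : ℝ) = 0) : α = 0 := by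
  have htop : vectorSpan ℝ (Set.range (fun i : s => x i)) = ⊤ := by
    apply hai.vectorSpan_eq_top_of_card_eq_finrank_add_one
    simp [finrank_euclideanSpace_fin, hcard]
  have hk : vectorSpan ℝ (Set.range (fun i : s => x i)) ≤
      LinearMap.ker (innerₛₗ ℝ α) := by
    rw [vectorSpan_def]
    apply Submodule.span_le.2
    rintro v ⟨u, ⟨i, rfl⟩, w, ⟨j, rfl⟩, rfl⟩
    simp only [SetLike.mem_coe, LinearMap.mem_ker]
    have := hα i i.2 j j.2
    simpa [vsub_eq_sub] using this
  have : (α : EuclideanSpace ℝ (Fin d)) ∈ LinearMap.ker (innerₛₗ ℝ α) := by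
    apply hk; rw [htop]; trivial
  have h0 : (inner ℝ α α : ℝ) = 0 := by simpa using this
  exact inner_self_eq_zero.1 h0

lemma lin_eq_zero {s : Finset (Fin n)} (hcard : s.card = d + 1)
    (hai : AffineIndependent ℝ (fun i : s => x i))
    (g : V d) (hg : ∀ i ∈ s, lin (x i) g = 0) : g = 0 := by
  have hs : s.Nonempty := by
    apply Finset.card_pos.1; omega
  have ha : g.1 = 0 := by
    apply zero_of_inner_diff hcard hai
    intro i hi j hj
    have h1 := hg i hi
    have h2 := hg j hj
    simp only [lin, LinearMap.coe_mk, AddHom.coe_mk] at h1 h2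
    have : (inner ℝ (x i) g.1 : ℝ) = inner ℝ (x j) g.1 := by linarith
    rw [inner_sub_right, real_inner_comm (x i), real_inner_comm (x j)]
    linarith
  obtain ⟨i, hi⟩ := hs
  have h1 := hg i hi
  simp only [lin, LinearMap.coe_mk, AddHom.coe_mk, ha, inner_zero_right] at h1
  have hb : g.2 = 0 := by linarith
  exact Prod.ext ha hb

lemma genpos_aff {s : Finset (Fin n)} (hx : GenPos x) (hs : s.Nonempty)
    (hcard : s.card ≤ d + 1) : AffineIndependent ℝ (fun i : s => x i) :=
  (hx s hs hcard).1

/-- No `d+2` points are cospherical. -/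
lemma not_cospherical (hx : GenPos x) {s : Finset (Fin n)} (hcard : s.card = d + 2)
    (c : EuclideanSpace ℝ (Fin d)) (r : ℝ) :
    ¬ (∀ i ∈ s, dist (x i) c = r) := by
  intro hall
  obtain ⟨i₀, hi₀⟩ : s.Nonempty := Finset.card_pos.1 (by omega)
  set s' := s.erase i₀ with hs'
  have hcard' : s'.card = d + 1 := by
    rw [hs', Finset.card_erase_of_mem hi₀, hcard]; omega
  have hs'ne : s'.Nonempty := Finset.card_pos.1 (by omega)
  have hsub : ∀ i ∈ s', i ∈ s := fun i hi => Finset.mem_of_mem_erase hi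
  have hG := hx s' hs'ne (le_of_eq hcard')
  -- key computation
  have key : ∀ (c'' : EuclideanSpace ℝ (Fin d)) (r'' : ℝ),
      (∀ i ∈ s', dist (x i) c'' = r'') → ∀ i ∈ s', ∀ j ∈ s',
      2 * (inner ℝ (x i - x j) c'' : ℝ) = ‖x i‖ ^ 2 - ‖x j‖ ^ 2 := by
    intro c'' r'' hd i hi j hj
    have h1 : ‖x i - c''‖ ^ 2 = r'' ^ 2 := by rw [← dist_eq_norm, hd i hi]
    have h2 : ‖x j - c''‖ ^ 2 = r'' ^ 2 := by rw [← dist_eq_norm, hd j hj]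
    rw [norm_sub_sq_real] at h1 h2
    rw [inner_sub_left]
    linarith
  have hmin : ∀ (c' : EuclideanSpace ℝ (Fin d)) (r' : ℝ),
      (∀ i ∈ s', dist (x i) c' = r') → r ≤ r' := by
    intro c' r' hd'
    have hceq : c - c' = 0 := by
      apply zero_of_inner_diff hcard' hG.1
      intro i hi j hj
      have k1 := key c r (fun i hi => hall i (hsub i hi)) i hi j hj
      have k2 := key c' r' hd' i hi j hj
      rw [real_inner_comm, inner_sub_right]
      simp only [inner_sub_left] at k1 k2 ⊢
      linarith
    obtain ⟨i₁, hi₁⟩ := hs'ne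
    have : r = r' := by
      rw [← hall i₁ (hsub i₁ hi₁), ← hd' i₁ hi₁]
      have : c = c' := by
        have := sub_eq_zero.1 hceq; exact this
      rw [this]
    exact le_of_eq this
  exact hG.2 c r ⟨fun i hi => hall i (hsub i hi), hmin⟩ i₀
    (Finset.notMem_erase i₀ s) (hall i₀ hi₀)

/-- Any set of points where a sphere functional vanishes has at most `d+1` elements. -/
lemma card_fev_zero_le (hx : GenPos x) {s : Finset (Fin n)} (f : V d)
    (hz : ∀ i ∈ s, Fev x f i = 0) : s.card ≤ d + 1 := by
  by_contra hlt
  push_neg at hlt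
  obtain ⟨s', hs's, hs'⟩ := Finset.exists_subset_card_eq (s := s) (n := d + 2) (by omega)
  have hs'ne : s'.Nonempty := Finset.card_pos.1 (by omega)
  obtain ⟨i₀, hi₀⟩ := hs'ne
  set R : ℝ := (inner ℝ f.1 f.1 : ℝ) - f.2 with hR
  have hdist : ∀ i ∈ s', dist (x i) f.1 ^ 2 = R := by
    intro i hi
    have h0 := hz i (hs's hi)
    have := Fev_center x f.1 (Real.sqrt R) i
    simp only [Fev, lin, LinearMap.coe_mk, AddHom.coe_mk] at h0 ⊢
    have expand : dist (x i) f.1 ^ 2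
        = (inner ℝ (x i) (x i) : ℝ) - 2 * inner ℝ (x i) f.1 + inner ℝ f.1 f.1 := by
      rw [dist_eq_norm, norm_sub_sq_real, real_inner_self_eq_norm_sq,
        real_inner_self_eq_norm_sq]
    rw [expand, hR]; linarith
  have hR0 : 0 ≤ R := by
    rw [← hdist i₀ hi₀]; positivity
  have : ∀ i ∈ s', dist (x i) f.1 = Real.sqrt R := by
    intro i hi
    rw [← hdist i hi, Real.sqrt_sq_eq_abs, abs_of_nonneg dist_nonneg]
  exact not_cospherical hx hs' f.1 (Real.sqrt R) this

end GP

attribute [local instance] Classical.propDecidable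

section PHI
variable (x : Fin n → EuclideanSpace ℝ (Fin d))

/-- The coordinate map of sphere functionals on the points enumerated by `y`. -/
noncomputable def Phi (y : Fin (d + 1) → Fin n) : V d →ₗ[ℝ] (Fin (d + 1) → ℝ) :=
  LinearMap.pi (fun i => lin (x (y i)))

/-- A good enumeration: image has full size `d+1` and is affinely independent. -/
def Good (y : Fin (d + 1) → Fin n) : Prop :=
  (Finset.image y Finset.univ).card = d + 1 ∧
    AffineIndependent ℝ (fun i : (Finset.image y Finset.univ) => x i)

lemma Good.inj {x : Fin n → EuclideanSpace ℝ (Fin d)} {y : Fin (d + 1) → Fin n}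
    (h : Good x y) : Function.Injective y := by
  have : (Finset.image y Finset.univ).card = (Finset.univ : Finset (Fin (d+1))).card := by
    rw [h.1, card_univ, Fintype.card_fin]
  have := Finset.card_image_iff.1 this
  rw [← Set.injOn_univ]
  simpa using this

lemma Phi_bijective {y : Fin (d + 1) → Fin n} (h : Good x y) :
    Function.Bijective (Phi x y) := by
  have hinj : Function.Injective (Phi x y) := by
    rw [← LinearMap.ker_eq_bot]
    apply LinearMap.ker_eq_bot'.2
    intro g hg
    apply lin_eq_zero h.1 h.2 g
    intro i hi
    obtain ⟨j, _, rfl⟩ := Finset.mem_image.1 hi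
    have := congrFun hg j
    simpa [Phi, LinearMap.pi_apply] using this
  refine ⟨hinj, ?_⟩
  apply (LinearMap.injective_iff_surjective_of_finrank_eq_finrank ?_).1 hinj
  simp [Module.finrank_prod, finrank_euclideanSpace_fin, Module.finrank_pi]

/-- The inverse coordinate equiv. -/
noncomputable def Psi (y : Fin (d + 1) → Fin n) (h : Good x y) :
    V d ≃ₗ[ℝ] (Fin (d + 1) → ℝ) :=
  LinearEquiv.ofBijective (Phi x y) (Phi_bijective x h)

lemma Psi_symm_spec (y : Fin (d + 1) → Fin n) (h : Good x y) (w : Fin (d + 1) → ℝ)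
    (i : Fin (d + 1)) : lin (x (y i)) ((Psi x y h).symm w) = w i := by
  have := (Psi x y h).apply_symm_apply w
  have h2 : Phi x y ((Psi x y h).symm w) = w := this
  have := congrFun h2 i
  simpa [Phi, LinearMap.pi_apply] using this

/-- Dual basis vectors associated to a good enumeration. -/
noncomputable def evec (y : Fin (d + 1) → Fin n) (v : Fin (d + 1)) : V d :=
  if h : Good x y then (Psi x y h).symm (Pi.single v 1) else ((0 : EuclideanSpace ℝ (Fin d)), (1:ℝ))

/-- The canonical sphere functional vanishing on the points of `y`. -/
noncomputable def fT (y : Fin (d + 1) → Fin n) : V d :=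
  if h : Good x y then
    (Psi x y h).symm (fun i => -(inner ℝ (x (y i)) (x (y i)) : ℝ))
  else ((0 : EuclideanSpace ℝ (Fin d)), (1:ℝ))

lemma evec_ne_zero (y : Fin (d + 1) → Fin n) (v : Fin (d + 1)) : evec x y v ≠ 0 := by
  unfold evec
  split
  · rename_i h
    intro h0
    have := congrArg (Psi x y h) h0
    rw [(Psi x y h).apply_symm_apply, map_zero] at this
    have := congrFun this v
    simp [Pi.single_apply] at this
  · intro h0
    have := congrArg Prod.snd h0
    simp at this

lemma fT_vanish {y : Fin (d + 1) → Fin n} (h : Good x y) (i : Fin (d + 1)) :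
    Fev x (fT x y) (y i) = 0 := by
  unfold fT
  rw [dif_pos h, Fev, Psi_symm_spec]
  ring

lemma rep (y : Fin (d + 1) → Fin n) (h : Good x y) (w : V d) :
    w = ∑ v : Fin (d + 1), (lin (x (y v)) w) • evec x y v := by
  apply (Psi x y h).injective
  rw [map_sum]
  have hc : ∀ v : Fin (d+1), (Psi x y h) ((lin (x (y v)) w) • evec x y v)
      = (lin (x (y v)) w) • (Pi.single v (1:ℝ) : Fin (d+1) → ℝ) := by
    intro v
    rw [map_smul]
    congr 1
    unfold evec
    rw [dif_pos h]
    exact (Psi x y h).apply_symm_apply _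
  rw [Finset.sum_congr rfl (fun v _ => hc v)]
  ext i
  simp only [Finset.sum_apply, Pi.smul_apply, Pi.single_apply, smul_eq_mul]
  rw [Finset.sum_eq_single i]
  · simp [Psi, LinearEquiv.ofBijective_apply, Phi, LinearMap.pi_apply]
  · intro b _ hb
    simp only [Pi.smul_apply, Pi.single_apply, smul_eq_mul, mul_ite, mul_one, mul_zero,
      ite_eq_right_iff]
    intro hib
    exact absurd hib.symm hb
  · simp

/-- Uniqueness of a sphere functional vanishing on the points of a good enumeration. -/
lemma vanish_unique {y : Fin (d + 1) → Fin n} (h : Good x y) {g : V d}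
    (hg : ∀ i : Fin (d + 1), Fev x g (y i) = 0) : g = fT x y := by
  have hdiff : ∀ i : Fin (d + 1), lin (x (y i)) (g - fT x y) = 0 := by
    intro i
    rw [← Fev_sub, hg i, fT_vanish x h i, sub_zero]
  have : Phi x y (g - fT x y) = 0 := by
    ext i
    simpa [Phi, LinearMap.pi_apply] using hdiff i
  have := (Phi_bijective x h).1 (by rw [this, map_zero] : Phi x y (g - fT x y) = Phi x y 0)
  exact sub_eq_zero.1 this

end PHI

section GEN

lemma exists_functional_ne_zero (e : V d) (he : e ≠ 0) :
    ∃ Λ' : V d →ₗ[ℝ] ℝ, Λ' e ≠ 0 := by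
  by_cases ha : e.1 = 0
  · refine ⟨LinearMap.snd ℝ _ ℝ, ?_⟩
    simp only [LinearMap.snd_apply]
    intro hb
    exact he (Prod.ext ha hb)
  · refine ⟨(innerₛₗ ℝ e.1).comp (LinearMap.fst ℝ _ ℝ), ?_⟩
    simp only [LinearMap.coe_comp, Function.comp_apply, LinearMap.fst_apply, innerₛₗ_apply_apply]
    intro h0
    exact ha (inner_self_eq_zero.1 h0)

lemma exists_generic (S : Finset (V d)) (hS : ∀ e ∈ S, e ≠ 0) :
    ∃ Λ : V d →ₗ[ℝ] ℝ, ∀ e ∈ S, Λ e ≠ 0 := by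
  classical
  induction S using Finset.induction with
  | empty => exact ⟨0, by simp⟩
  | @insert e S he IH =>
    obtain ⟨Λ, hΛ⟩ := IH (fun s hs => hS s (Finset.mem_insert_of_mem hs))
    obtain ⟨Λ', hΛ'⟩ := exists_functional_ne_zero e (hS e (Finset.mem_insert_self e S))
    set B : Finset ℝ := (insert e S).image (fun s => -(Λ s) / (Λ' s)) with hB
    obtain ⟨t, ht⟩ := Infinite.exists_notMem_finset B
    refine ⟨Λ + t • Λ', ?_⟩
    intro s hs h0
    simp only [LinearMap.add_apply, LinearMap.smul_apply, smul_eq_mul] at h0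
    rcases Finset.mem_insert.1 hs with rfl | hsS
    · have hne := hΛ'
      apply ht
      rw [hB]
      apply Finset.mem_image.2
      refine ⟨s, Finset.mem_insert_self s S, ?_⟩
      field_simp
      linarith
    · by_cases hz : Λ' s = 0
      · rw [hz, mul_zero, add_zero] at h0
        exact hΛ s hsS h0
      · apply ht
        rw [hB]
        apply Finset.mem_image.2
        refine ⟨s, Finset.mem_insert_of_mem hsS, ?_⟩
        field_simp
        linarith

end GEN

section CORE
variable (x : Fin n → EuclideanSpace ℝ (Fin d))

/-- The core charging estimate: if `Λ` is negative on the dual vectors indexed by `N`,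
then `fT` maximizes `Λ` uniquely among feasible functionals. -/
lemma core (Λ : V d →ₗ[ℝ] ℝ) {y : Fin (d + 1) → Fin n} (h : Good x y)
    (hsm : StrictMono y)
    (N : Finset (Fin (d + 1))) (hNlast : Fin.last d ∉ N)
    (hneg : ∀ v ∈ N, Λ (evec x y v) < 0)
    (g : V d) (hgz : ∀ i : Fin (d + 1), i ∉ N → Fev x g (y i) = 0)
    (hgpre : ∀ j : Fin n, j < y (Fin.last d) → 0 ≤ Fev x g j) :
    Λ g ≤ Λ (fT x y) ∧ (Λ g = Λ (fT x y) → g = fT x y) := by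
  set w := g - fT x y with hw
  have hc : ∀ v : Fin (d + 1), lin (x (y v)) w = Fev x g (y v) := by
    intro v
    rw [hw, ← Fev_sub, fT_vanish x h v, sub_zero]
  have hrep := rep x y h w
  have hcoef_zero : ∀ v : Fin (d+1), v ∉ N → lin (x (y v)) w = 0 := by
    intro v hv
    rw [hc v]
    exact hgz v hv
  have hcoef_nonneg : ∀ v ∈ N, 0 ≤ lin (x (y v)) w := by
    intro v hv
    rw [hc v]
    apply hgpre
    apply hsm
    have : v ≠ Fin.last d := fun hv' => hNlast (hv' ▸ hv)
    exact Fin.lt_last_iff_ne_last.2 this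
  have hsum : Λ w = ∑ v ∈ N, (lin (x (y v)) w) * Λ (evec x y v) := by
    conv_lhs => rw [hrep]
    rw [map_sum]
    rw [← Finset.sum_subset (Finset.subset_univ N)]
    · apply Finset.sum_congr rfl
      intro v _
      rw [map_smul, smul_eq_mul]
    · intro v _ hv
      rw [hcoef_zero v hv, zero_smul, map_zero]
  have hterm : ∀ v ∈ N, (lin (x (y v)) w) * Λ (evec x y v) ≤ 0 := by
    intro v hv
    exact mul_nonpos_of_nonneg_of_nonpos (hcoef_nonneg v hv) (le_of_lt (hneg v hv))
  have hΛw : Λ w ≤ 0 := by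
    rw [hsum]
    exact Finset.sum_nonpos hterm
  have hgf : Λ g - Λ (fT x y) = Λ w := by rw [hw, map_sub]
  constructor
  · linarith
  · intro heq
    have hw0 : Λ w = 0 := by linarith
    have hall0 : ∀ v ∈ N, (lin (x (y v)) w) * Λ (evec x y v) = 0 := by
      intro v hv
      have := (Finset.sum_eq_zero_iff_of_nonpos hterm).1 (by rw [← hsum]; exact hw0) v hv
      exact this
    have hcz : ∀ v : Fin (d+1), lin (x (y v)) w = 0 := by
      intro v
      by_cases hv : v ∈ N
      · have := hall0 v hv
        rcases mul_eq_zero.1 this with h1 | h2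
        · exact h1
        · exact absurd h2 (ne_of_lt (hneg v hv))
      · exact hcoef_zero v hv
    have : w = 0 := by
      rw [hrep]
      apply Finset.sum_eq_zero
      intro v _
      rw [hcz v, zero_smul]
    rw [hw] at this
    exact sub_eq_zero.1 this

end CORE

section PIVOT
variable (x : Fin n → EuclideanSpace ℝ (Fin d))

/-- Feasibility of a sphere functional for the insertion of point `m`. -/
def Feas (m : Fin n) (f : V d) : Prop :=
  (∀ j : Fin n, j < m → 0 ≤ Fev x f j) ∧ Fev x f m ≤ 0

/-- Tight set of a functional. -/
noncomputable def Zs (m : Fin n) (f : V d) : Finset (Fin n) :=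
  Finset.univ.filter (fun j => j ≤ m ∧ Fev x f j = 0)

lemma pivot_aux {x : Fin n → EuclideanSpace ℝ (Fin d)} (hx : GenPos x) (m : Fin n)
    (hm : d + 1 ≤ (m : ℕ)) :
    ∀ k : ℕ, ∀ f₀ : V d, Feas x m f₀ → d + 1 - (Zs x m f₀).card ≤ k →
    ∃ f : V d, Feas x m f ∧ Zs x m f₀ ⊆ Zs x m f ∧ (Zs x m f).card = d + 1 := by
  intro k
  induction k with
  | zero =>
    intro f₀ hf₀ hk
    refine ⟨f₀, hf₀, Finset.Subset.refl _, ?_⟩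
    have hle : (Zs x m f₀).card ≤ d + 1 := by
      apply card_fev_zero_le hx f₀
      intro i hi
      exact ((Finset.mem_filter.1 hi).2).2
    omega
  | succ k IH =>
    intro f₀ hf₀ hk
    by_cases hsmall : d + 1 - (Zs x m f₀).card ≤ k
    · exact IH f₀ hf₀ hsmall
    have hcard : (Zs x m f₀).card ≤ d := by omega
    -- find a direction in the kernel of the tight constraints
    obtain ⟨g₁, hg₁ker, hg₁ne⟩ : ∃ g : V d, (∀ j ∈ Zs x m f₀, lin (x j) g = 0) ∧ g ≠ 0 := by
      set L : V d →ₗ[ℝ] ({j // j ∈ Zs x m f₀} → ℝ) :=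
        LinearMap.pi (fun j : {j // j ∈ Zs x m f₀} => lin (x j.1)) with hL
      have hker : LinearMap.ker L ≠ ⊥ := by
        intro hbot
        have h1 := LinearMap.finrank_range_add_finrank_ker L
        have h2 : Module.finrank ℝ (LinearMap.ker L) = 0 := by rw [hbot]; simp
        have h3 : Module.finrank ℝ (LinearMap.range L) ≤ (Zs x m f₀).card := by
          calc Module.finrank ℝ (LinearMap.range L)
              ≤ Module.finrank ℝ ({j // j ∈ Zs x m f₀} → ℝ) := Submodule.finrank_le _
            _ = (Zs x m f₀).card := by
                rw [Module.finrank_pi]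
                exact Fintype.card_coe _
        have h4 : Module.finrank ℝ (V d) = d + 1 := by
          simp [Module.finrank_prod, finrank_euclideanSpace_fin]
        omega
      obtain ⟨g, hg, hgne⟩ := Submodule.exists_mem_ne_zero_of_ne_bot hker
      refine ⟨g, ?_, hgne⟩
      intro j hj
      have := congrFun (LinearMap.mem_ker.1 hg) ⟨j, hj⟩
      simpa [hL, LinearMap.pi_apply] using this
    -- some earlier point is not killed by the direction
    obtain ⟨j₀, hj₀m, hj₀⟩ : ∃ j₀ : Fin n, j₀ < m ∧ lin (x j₀) g₁ ≠ 0 := by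
      by_contra hcon
      push_neg at hcon
      apply hg₁ne
      have hemb : ∀ i : Fin (d+1), (i : ℕ) < n :=
        fun i => lt_trans (lt_of_lt_of_le i.isLt hm) m.isLt
      set s₀ : Finset (Fin n) :=
        Finset.image (fun i : Fin (d+1) => (⟨(i : ℕ), hemb i⟩ : Fin n)) Finset.univ with hs₀
      have hinj : Function.Injective (fun i : Fin (d+1) => (⟨(i : ℕ), hemb i⟩ : Fin n)) := by
        intro i i' hii
        simp only [Fin.mk.injEq] at hii
        exact Fin.ext hii
      have hs₀card : s₀.card = d + 1 := by
        rw [hs₀, Finset.card_image_of_injective _ hinj, card_univ, Fintype.card_fin]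
      have hs₀lt : ∀ j ∈ s₀, j < m := by
        intro j hj
        rw [hs₀] at hj
        obtain ⟨i, _, rfl⟩ := Finset.mem_image.1 hj
        have : (i : ℕ) < (m : ℕ) := lt_of_lt_of_le i.isLt hm
        exact this
      have hane : s₀.Nonempty := Finset.card_pos.1 (by omega)
      apply lin_eq_zero hs₀card (genpos_aff hx hane (le_of_eq hs₀card)) g₁
      intro i hi
      exact hcon i (hs₀lt i hi)
    -- arrange that the "decreasing set" is nonempty
    have hmain : ∀ g : V d, (∀ j ∈ Zs x m f₀, lin (x j) g = 0) →
        (Finset.univ.filter (fun j : Fin n =>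
          (j < m ∧ lin (x j) g < 0) ∨ (j = m ∧ 0 < lin (x j) g))).Nonempty →
        ∃ f : V d, Feas x m f ∧ Zs x m f₀ ⊆ Zs x m f ∧ (Zs x m f).card = d + 1 := by
      intro g hgker hDne
      set D := Finset.univ.filter (fun j : Fin n =>
          (j < m ∧ lin (x j) g < 0) ∨ (j = m ∧ 0 < lin (x j) g)) with hD
      obtain ⟨js, hjsD, hjsmin⟩ :=
        Finset.exists_min_image D (fun j => -(Fev x f₀ j) / (lin (x j) g)) hDne
      have hjs' := Finset.mem_filter.1 hjsD
      set t : ℝ := -(Fev x f₀ js) / (lin (x js) g) with ht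
      have hlinne : lin (x js) g ≠ 0 := by
        rcases hjs'.2 with ⟨_, hneg⟩ | ⟨_, hpos⟩
        · exact ne_of_lt hneg
        · exact ne_of_gt hpos
      have htnn : 0 ≤ t := by
        rw [ht, div_nonneg_iff]
        rcases hjs'.2 with ⟨hlt, hneg⟩ | ⟨heq, hpos⟩
        · have h1 : 0 ≤ Fev x f₀ js := hf₀.1 js hlt
          right; constructor <;> linarith
        · have h1 : Fev x f₀ js ≤ 0 := heq ▸ hf₀.2
          left; constructor <;> linarith
      set f' := f₀ + t • g with hf'
      have hFe : ∀ j : Fin n, Fev x f' j = Fev x f₀ j + t * lin (x j) g := by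
        intro j
        rw [hf', Fev_add_smul]
      have hjszero : Fev x f' js = 0 := by
        have h2 : t * lin (x js) g = -(Fev x f₀ js) := by
          rw [ht]
          exact div_mul_cancel₀ _ hlinne
        rw [hFe]; linarith
      have hfeas : Feas x m f' := by
        constructor
        · intro j hjm
          rw [hFe]
          by_cases hlin : 0 ≤ lin (x j) g
          · have := hf₀.1 j hjm
            nlinarith
          · push_neg at hlin
            have hjD : j ∈ D := by
              rw [hD]
              exact Finset.mem_filter.2 ⟨Finset.mem_univ j, Or.inl ⟨hjm, hlin⟩⟩
            have hts := hjsmin j hjD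
            have hρj : (-(Fev x f₀ j) / (lin (x j) g)) * lin (x j) g = -(Fev x f₀ j) :=
              div_mul_cancel₀ _ (ne_of_lt hlin)
            have h2 : t * lin (x j) g ≥ (-(Fev x f₀ j) / (lin (x j) g)) * lin (x j) g :=
              mul_le_mul_of_nonpos_right hts (le_of_lt hlin)
            linarith
        · rw [hFe]
          by_cases hlin : lin (x m) g ≤ 0
          · have := hf₀.2
            nlinarith
          · push_neg at hlin
            have hmD : m ∈ D := by
              rw [hD]
              exact Finset.mem_filter.2 ⟨Finset.mem_univ m, Or.inr ⟨rfl, hlin⟩⟩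
            have hts := hjsmin m hmD
            have hρj : (-(Fev x f₀ m) / (lin (x m) g)) * lin (x m) g = -(Fev x f₀ m) :=
              div_mul_cancel₀ _ (ne_of_gt hlin)
            have h2 : t * lin (x m) g ≤ (-(Fev x f₀ m) / (lin (x m) g)) * lin (x m) g :=
              mul_le_mul_of_nonneg_right hts (le_of_lt hlin)
            linarith
      have hZsub : Zs x m f₀ ⊆ Zs x m f' := by
        intro j hj
        have hj' := Finset.mem_filter.1 hj
        apply Finset.mem_filter.2
        refine ⟨Finset.mem_univ j, hj'.2.1, ?_⟩
        rw [hFe, hj'.2.2, hgker j hj, mul_zero, add_zero]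
      have hjsZ : js ∈ Zs x m f' := by
        apply Finset.mem_filter.2
        refine ⟨Finset.mem_univ js, ?_, hjszero⟩
        rcases hjs'.2 with ⟨hlt, _⟩ | ⟨heq, _⟩
        · exact le_of_lt hlt
        · exact le_of_eq heq
      have hjsnotZ : js ∉ Zs x m f₀ := by
        intro hmem
        exact hlinne (hgker js hmem)
      have hss : Zs x m f₀ ⊂ Zs x m f' :=
        Finset.ssubset_iff_of_subset hZsub |>.2 ⟨js, hjsZ, hjsnotZ⟩
      have hcardlt := Finset.card_lt_card hss
      have hbound : (Zs x m f').card ≤ d + 1 := by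
        apply card_fev_zero_le hx f'
        intro i hi
        exact ((Finset.mem_filter.1 hi).2).2
      obtain ⟨f, hfe, hsub, hcardf⟩ := IH f' hfeas (by omega)
      exact ⟨f, hfe, Finset.Subset.trans hZsub hsub, hcardf⟩
    -- apply to g₁ or -g₁
    by_cases hcase : lin (x j₀) g₁ < 0
    · apply hmain g₁ hg₁ker
      exact ⟨j₀, Finset.mem_filter.2 ⟨Finset.mem_univ j₀, Or.inl ⟨hj₀m, hcase⟩⟩⟩
    · push_neg at hcase
      have hpos : 0 < lin (x j₀) g₁ := lt_of_le_of_ne hcase (Ne.symm hj₀)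
      apply hmain (-g₁)
      · intro j hj
        rw [map_neg, hg₁ker j hj, neg_zero]
      · refine ⟨j₀, Finset.mem_filter.2 ⟨Finset.mem_univ j₀, Or.inl ⟨hj₀m, ?_⟩⟩⟩
        rw [map_neg]
        linarith

end PIVOT

section CHARGE
variable (x : Fin n → EuclideanSpace ℝ (Fin d))

/-- enumeration of a `(d+1)`-subset -/
noncomputable def yOf (T : Finset (Fin n)) (h : T.card = d + 1) : Fin (d + 1) → Fin n :=
  fun i => ((T.orderIsoOfFin h i : {a // a ∈ T}) : Fin n)

lemma yOf_mem (T : Finset (Fin n)) (h : T.card = d + 1) (i : Fin (d + 1)) :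
    yOf T h i ∈ T := (T.orderIsoOfFin h i).2

lemma yOf_strictMono (T : Finset (Fin n)) (h : T.card = d + 1) :
    StrictMono (yOf T h) := by
  intro a b hab
  have := (T.orderIsoOfFin h).strictMono hab
  exact this

lemma yOf_image (T : Finset (Fin n)) (h : T.card = d + 1) :
    Finset.image (yOf T h) Finset.univ = T := by
  apply Finset.eq_of_subset_of_card_le
  · intro j hj
    obtain ⟨i, _, rfl⟩ := Finset.mem_image.1 hj
    exact yOf_mem T h i
  · rw [h, Finset.card_image_of_injective _ (yOf_strictMono T h).injective,
      card_univ, Fintype.card_fin]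

lemma yOf_last (T : Finset (Fin n)) (h : T.card = d + 1) :
    ∀ j ∈ T, j ≤ yOf T h (Fin.last d) := by
  intro j hj
  rw [← yOf_image T h] at hj
  obtain ⟨i, _, rfl⟩ := Finset.mem_image.1 hj
  exact (yOf_strictMono T h).monotone (Fin.le_last i)

lemma good_yOf (hx : GenPos x) (T : Finset (Fin n)) (h : T.card = d + 1) :
    Good x (yOf T h) := by
  constructor
  · rw [yOf_image T h, h]
  · rw [yOf_image T h]
    exact genpos_aff hx (Finset.card_pos.1 (by omega)) (le_of_eq h)

/-- The finite set of all dual vectors, over which we pick a generic functional. -/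
noncomputable def evecSet : Finset (V d) :=
  (Finset.univ.powersetCard (d + 1)).attach.biUnion (fun T =>
    Finset.image
      (fun v => evec x (yOf T.1 (Finset.mem_powersetCard.1 T.2).2) v) Finset.univ)

lemma evecSet_ne_zero : ∀ e ∈ evecSet x, e ≠ 0 := by
  intro e he
  obtain ⟨T, _, heim⟩ := Finset.mem_biUnion.1 he
  obtain ⟨v, _, rfl⟩ := Finset.mem_image.1 heim
  exact evec_ne_zero x _ v

lemma evec_mem_evecSet (T : Finset (Fin n)) (h : T.card = d + 1) (v : Fin (d + 1)) :
    evec x (yOf T h) v ∈ evecSet x := by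
  apply Finset.mem_biUnion.2
  have hT : T ∈ Finset.univ.powersetCard (d + 1) :=
    Finset.mem_powersetCard.2 ⟨Finset.subset_univ T, h⟩
  refine ⟨⟨T, hT⟩, Finset.mem_attach _ _, ?_⟩
  apply Finset.mem_image.2
  exact ⟨v, Finset.mem_univ v, rfl⟩

/-- The key uniqueness property of the canonical functional of a charged set. -/
def CoreP (Λ : V d →ₗ[ℝ] ℝ) (G : Finset (Fin n)) (f : V d) : Prop :=
  ∀ g : V d, (∀ j ∈ G, Fev x g j = 0) →
    (∀ j : Fin n, (∃ u ∈ G, j < u) → 0 ≤ Fev x g j) →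
    Λ g ≤ Λ f ∧ (Λ g = Λ f → g = f)

lemma charge (hx : GenPos x) (Λ : V d →ₗ[ℝ] ℝ)
    (hgen : ∀ e ∈ evecSet x, Λ e ≠ 0)
    (T : Finset (Fin n)) (hT : T.card = d + 1) (f : V d)
    (hvanish : ∀ j ∈ T, Fev x f j = 0)
    (hpre : ∀ j : Fin n, (∃ u ∈ T, j < u) → 0 ≤ Fev x f j) :
    ∃ (G : Finset (Fin n)) (b1 : Bool), G ⊆ T ∧ G.card = (d + 2) / 2 ∧
      (∃ μ ∈ G, ∀ j ∈ T, j ≤ μ) ∧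
      (if b1 then CoreP x Λ G f else CoreP x (-Λ) G f) := by
  set y := yOf T hT with hy
  have hgood : Good x y := good_yOf x hx T hT
  have hsm : StrictMono y := yOf_strictMono T hT
  have hfT : f = fT x y := by
    apply vanish_unique x hgood
    intro i
    exact hvanish (y i) (yOf_mem T hT i)
  -- sign pigeonhole on the non-maximal positions
  set P : Finset (Fin (d + 1)) := Finset.univ.erase (Fin.last d) with hP
  have hPcard : P.card = d := by
    rw [hP, Finset.card_erase_of_mem (Finset.mem_univ _), card_univ, Fintype.card_fin]
    omega
  set Neg : Finset (Fin (d + 1)) := P.filter (fun v => Λ (evec x y v) < 0) with hNeg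
  set Pos : Finset (Fin (d + 1)) := P.filter (fun v => 0 < Λ (evec x y v)) with hPos
  have hsplit : Neg.card + Pos.card = d := by
    have hcompl : P.filter (fun v => ¬ Λ (evec x y v) < 0) = Pos := by
      rw [hPos]
      apply Finset.filter_congr
      intro v _
      have hne : Λ (evec x y v) ≠ 0 := hgen _ (evec_mem_evecSet x T hT v)
      simp only [not_lt]
      constructor
      · intro h'
        exact lt_of_le_of_ne h' (Ne.symm hne)
      · exact le_of_lt
    have h0 := Finset.card_filter_add_card_filter_not (s := P)
      (p := fun v => Λ (evec x y v) < 0)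
    rw [hcompl, ← hNeg] at h0
    omega
  set k' : ℕ := (d + 1) / 2 with hk'
  have hGcard : ∀ N : Finset (Fin (d+1)), N ⊆ P → N.card = k' →
      (T \ Finset.image y N).card = (d + 2) / 2 ∧
      Finset.image y N ⊆ T ∧ y (Fin.last d) ∈ T \ Finset.image y N := by
    intro N hNP hNcard
    have himsub : Finset.image y N ⊆ T := by
      intro j hj
      obtain ⟨i, _, rfl⟩ := Finset.mem_image.1 hj
      exact yOf_mem T hT i
    have himcard : (Finset.image y N).card = k' := by
      rw [Finset.card_image_of_injective _ hsm.injective, hNcard]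
    have hlastmem : y (Fin.last d) ∈ T \ Finset.image y N := by
      apply Finset.mem_sdiff.2
      refine ⟨yOf_mem T hT _, ?_⟩
      intro hmem
      obtain ⟨i, hiN, hie⟩ := Finset.mem_image.1 hmem
      have : i = Fin.last d := hsm.injective hie
      rw [this] at hiN
      exact (Finset.mem_erase.1 (hNP hiN)).1 rfl
    refine ⟨?_, himsub, hlastmem⟩
    rw [Finset.card_sdiff_of_subset himsub, himcard, hT, hk']
    omega
  -- the core property for a chosen sign class
  have hcore : ∀ (Λ₀ : V d →ₗ[ℝ] ℝ) (N : Finset (Fin (d+1))), N ⊆ P →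
      (∀ v ∈ N, Λ₀ (evec x y v) < 0) → CoreP x Λ₀ (T \ Finset.image y N) f := by
    intro Λ₀ N hNP hneg g hgz hgpre
    have hNlast : Fin.last d ∉ N := by
      intro hmem
      exact (Finset.mem_erase.1 (hNP hmem)).1 rfl
    rw [hfT]
    apply core x Λ₀ hgood hsm N hNlast hneg g
    · intro i hiN
      apply hgz
      apply Finset.mem_sdiff.2
      refine ⟨yOf_mem T hT i, ?_⟩
      intro hmem
      obtain ⟨i', hi'N, hi'e⟩ := Finset.mem_image.1 hmem
      rw [hsm.injective hi'e] at hi'N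
      exact hiN hi'N
    · intro j hj
      apply hgpre
      refine ⟨y (Fin.last d), ?_, hj⟩
      apply Finset.mem_sdiff.2
      refine ⟨yOf_mem T hT _, ?_⟩
      intro hmem
      obtain ⟨i', hi'N, hi'e⟩ := Finset.mem_image.1 hmem
      rw [hsm.injective hi'e] at hi'N
      exact hNlast hi'N
  by_cases hcase : k' ≤ Neg.card
  · obtain ⟨N, hNsub, hNcard⟩ := Finset.exists_subset_card_eq hcase
    have hNP : N ⊆ P := Finset.Subset.trans hNsub (Finset.filter_subset _ _)
    obtain ⟨hc1, hc2, hc3⟩ := hGcard N hNP hNcard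
    refine ⟨T \ Finset.image y N, true, Finset.sdiff_subset, hc1,
      ⟨y (Fin.last d), hc3, yOf_last T hT⟩, ?_⟩
    simp only [if_true]
    apply hcore Λ N hNP
    intro v hv
    exact (Finset.mem_filter.1 (hNsub hv)).2
  · have hPosBig : k' ≤ Pos.card := by omega
    obtain ⟨N, hNsub, hNcard⟩ := Finset.exists_subset_card_eq hPosBig
    have hNP : N ⊆ P := Finset.Subset.trans hNsub (Finset.filter_subset _ _)
    obtain ⟨hc1, hc2, hc3⟩ := hGcard N hNP hNcard
    refine ⟨T \ Finset.image y N, false, Finset.sdiff_subset, hc1,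
      ⟨y (Fin.last d), hc3, yOf_last T hT⟩, ?_⟩
    simp only [if_false, Bool.false_eq_true]
    apply hcore (-Λ) N hNP
    intro v hv
    have := (Finset.mem_filter.1 (hNsub hv)).2
    simp only [LinearMap.neg_apply]
    linarith

end CHARGE

section PROPS
variable (x : Fin n → EuclideanSpace ℝ (Fin d))

/-- rank of an element inside a finite set -/
noncomputable def rk (U : Finset (Fin n)) (i : Fin n) : ℕ := (U.filter (· < i)).card

lemma rk_strictMonoOn (U : Finset (Fin n)) {a b : Fin n} (ha : a ∈ U) (hab : a < b) :
    rk U a < rk U b := by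
  apply Finset.card_lt_card
  rw [Finset.ssubset_iff_of_subset]
  · exact ⟨a, Finset.mem_filter.2 ⟨ha, hab⟩, fun hmem => absurd (Finset.mem_filter.1 hmem).2
      (lt_irrefl a)⟩
  · intro j hj
    have := Finset.mem_filter.1 hj
    exact Finset.mem_filter.2 ⟨this.1, lt_trans this.2 hab⟩

lemma rk_injOn (U : Finset (Fin n)) {a b : Fin n} (ha : a ∈ U) (hb : b ∈ U)
    (hab : rk U a = rk U b) : a = b := by
  rcases lt_trichotomy a b with h | h | h
  · exact absurd hab (ne_of_lt (rk_strictMonoOn U ha h))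
  · exact h
  · exact absurd hab.symm (ne_of_lt (rk_strictMonoOn U hb h))

/-- The full data certificate attached to a simplex of the incremental complex. -/
def Props (Λ : V d →ₗ[ℝ] ℝ) (σ G : Finset (Fin n)) (b1 b2 : Bool)
    (mask : Finset ℕ) : Prop :=
  ∃ (T : Finset (Fin n)) (f : V d) (hσ : σ.Nonempty),
    G ⊆ T ∧ T.card = d + 1 ∧ G.card = (d + 2) / 2 ∧
    (∀ j ∈ T, j ≤ σ.max' hσ) ∧
    (∃ μ ∈ G, ∀ j ∈ T, j ≤ μ) ∧
    (∀ j ∈ T, Fev x f j = 0) ∧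
    (∀ j : Fin n, Fev x f j = 0 → j ∈ T) ∧
    (∀ j : Fin n, j < σ.max' hσ → 0 ≤ Fev x f j) ∧
    (Fev x f (σ.max' hσ) ≤ 0) ∧
    (b2 = true ↔ σ.max' hσ ∈ T) ∧
    (if b1 then CoreP x Λ G f else CoreP x (-Λ) G f) ∧
    σ ⊆ T ∪ {σ.max' hσ} ∧
    mask = σ.image (rk (T ∪ {σ.max' hσ})) ∧
    mask ⊆ Finset.range (d + 2)

lemma keyExists (hx : GenPos x) (Λ : V d →ₗ[ℝ] ℝ)
    (hgen : ∀ e ∈ evecSet x, Λ e ≠ 0)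
    (σ : Finset (Fin n)) (hσ : IncrMem x σ) (hne : σ.Nonempty)
    (hbig : d + 1 ≤ ((σ.max' hne : Fin n) : ℕ)) :
    ∃ (G : Finset (Fin n)) (b1 b2 : Bool) (mask : Finset ℕ),
      Props x Λ σ G b1 b2 mask := by
  obtain ⟨hne', c, r, hτ, hm, hpre⟩ := hσ
  set m := σ.max' hne with hmdef
  have hr0 : 0 ≤ r := le_trans dist_nonneg hm
  set f₀ : V d := (c, (inner ℝ c c : ℝ) - r ^ 2) with hf₀
  have hFev₀ : ∀ j : Fin n, Fev x f₀ j = dist (x j) c ^ 2 - r ^ 2 :=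
    fun j => Fev_center x c r j
  have hfeas₀ : Feas x m f₀ := by
    constructor
    · intro j hj
      rw [hFev₀]
      have h1 := hpre j hj
      nlinarith [dist_nonneg (x := x j) (y := c)]
    · rw [hFev₀]
      nlinarith [dist_nonneg (x := x m) (y := c)]
  obtain ⟨f, hfeas, hZsub, hZcard⟩ :=
    pivot_aux hx m hbig (d + 1) f₀ hfeas₀ (by omega)
  set T := Zs x m f with hTdef
  have hTcard : T.card = d + 1 := hZcard
  have hvanish : ∀ j ∈ T, Fev x f j = 0 := fun j hj => (Finset.mem_filter.1 hj).2.2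
  have hTm : ∀ j ∈ T, j ≤ m := fun j hj => (Finset.mem_filter.1 hj).2.1
  have hexact : ∀ j : Fin n, Fev x f j = 0 → j ∈ T := by
    intro j hjz
    by_contra hjT
    have hcard2 : (insert j T).card = d + 2 := by
      rw [Finset.card_insert_of_notMem hjT, hTcard]
    have : (insert j T).card ≤ d + 1 := by
      apply card_fev_zero_le hx f
      intro i hi
      rcases Finset.mem_insert.1 hi with rfl | hiT
      · exact hjz
      · exact hvanish i hiT
    omega
  have hσsub : σ ⊆ T ∪ {m} := by
    intro i hi
    by_cases him : i = m
    · rw [him]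
      exact Finset.mem_union_right _ (Finset.mem_singleton_self m)
    · apply Finset.mem_union_left
      apply hZsub
      apply Finset.mem_filter.2
      refine ⟨Finset.mem_univ i, Finset.le_max' σ i hi, ?_⟩
      rw [hFev₀, hτ i (Finset.mem_erase.2 ⟨him, hi⟩)]
      ring
  obtain ⟨G, b1, hGT, hGcard, ⟨μ, hμG, hμmax⟩, hcore⟩ := by
    refine charge x hx Λ hgen T hTcard f hvanish ?_
    intro j ⟨u, huT, hju⟩
    exact hfeas.1 j (lt_of_lt_of_le hju (hTm u huT))
  refine ⟨G, b1, decide (m ∈ T), σ.image (rk (T ∪ {m})), T, f, hne, hGT, hTcard, hGcard,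
    hTm, ⟨μ, hμG, hμmax⟩, hvanish, hexact, hfeas.1, hfeas.2, by simp [hmdef], hcore, hσsub, rfl, ?_⟩
  intro v hv
  obtain ⟨i, hiσ, rfl⟩ := Finset.mem_image.1 hv
  apply Finset.mem_range.2
  have hiU : i ∈ T ∪ {m} := hσsub hiσ
  have h1 : (T ∪ {m}).filter (· < i) ⊆ (T ∪ {m}).erase i := by
    intro j hj
    have := Finset.mem_filter.1 hj
    exact Finset.mem_erase.2 ⟨ne_of_lt this.2, this.1⟩
  have h2 : ((T ∪ {m}).erase i).card ≤ d + 1 := by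
    have hU : (T ∪ {m}).card ≤ d + 2 := by
      calc (T ∪ {m}).card ≤ T.card + ({m} : Finset (Fin n)).card := Finset.card_union_le _ _
        _ = d + 2 := by rw [hTcard, Finset.card_singleton]
    have := Finset.card_erase_of_mem hiU
    omega
  calc (rk (T ∪ {m}) i) ≤ ((T ∪ {m}).erase i).card := Finset.card_le_card h1
    _ ≤ d + 1 := h2
    _ < d + 2 := by omega

lemma props_inj (Λ : V d →ₗ[ℝ] ℝ) {σ σ' G : Finset (Fin n)} {b1 b2 : Bool}
    {mask : Finset ℕ}
    (h : Props x Λ σ G b1 b2 mask) (h' : Props x Λ σ' G b1 b2 mask) : σ = σ' := by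
  obtain ⟨T, f, hσne, hGT, hTcard, hGcard, hTm, ⟨μ, hμG, hμmax⟩, hvan, hexact, hpre,
    hFm, hb2, hcore, hσU, hmask, hmaskrange⟩ := h
  obtain ⟨T', f', hσne', hGT', hTcard', hGcard', hTm', ⟨μ', hμG', hμmax'⟩, hvan', hexact',
    hpre', hFm', hb2', hcore', hσU', hmask', hmaskrange'⟩ := h'
  set m := σ.max' hσne with hm
  set m' := σ'.max' hσne' with hm'
  -- the canonical functionals agree
  have happly : ∀ (Λ₀ : V d →ₗ[ℝ] ℝ), CoreP x Λ₀ G f → CoreP x Λ₀ G f' → f = f' := by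
    intro Λ₀ hc hc'
    have hfeas' : (∀ j ∈ G, Fev x f' j = 0) ∧
        (∀ j : Fin n, (∃ u ∈ G, j < u) → 0 ≤ Fev x f' j) := by
      constructor
      · intro j hj
        exact hvan' j (hGT' hj)
      · intro j ⟨u, huG, hju⟩
        exact hpre' j (lt_of_lt_of_le hju (le_trans (hTm' u (hGT' huG)) (le_refl m')))
    have hfeas : (∀ j ∈ G, Fev x f j = 0) ∧
        (∀ j : Fin n, (∃ u ∈ G, j < u) → 0 ≤ Fev x f j) := by
      constructor
      · intro j hj
        exact hvan j (hGT hj)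
      · intro j ⟨u, huG, hju⟩
        exact hpre j (lt_of_lt_of_le hju (hTm u (hGT huG)))
    have h1 := hc f' hfeas'.1 hfeas'.2
    have h2 := hc' f hfeas.1 hfeas.2
    exact (h1.2 (le_antisymm h1.1 h2.1)).symm
  have hff' : f = f' := by
    cases b1 with
    | true =>
      simp only [if_true] at hcore hcore'
      exact happly Λ hcore hcore'
    | false =>
      simp only [Bool.false_eq_true, if_false] at hcore hcore'
      exact happly (-Λ) hcore hcore'
  -- the tight sets agree
  have hTT' : T = T' := by
    apply Finset.eq_of_subset_of_card_le
    · intro j hj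
      apply hexact' j
      rw [← hff']
      exact hvan j hj
    · rw [hTcard, hTcard']
  -- the maxima agree
  have hmm' : m = m' := by
    cases hcase : b2 with
    | true =>
      have h1 : m ∈ T := hb2.1 hcase
      have h2 : m' ∈ T' := hb2'.1 hcase
      rw [← hTT'] at h2
      exact le_antisymm (by rw [hTT'] at h1; exact hTm' m h1) (hTm m' h2)
    | false =>
      have h1 : m ∈ T → False := by
        intro hmem
        rw [← hb2] at hmem
        simp [hcase] at hmem
      have h2 : m' ∈ T' → False := by
        intro hmem
        rw [← hb2'] at hmem
        simp [hcase] at hmem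
      have hFmneg : Fev x f m < 0 := by
        rcases lt_or_eq_of_le hFm with hlt | heq
        · exact hlt
        · exact absurd (hexact m heq) h1
      have hFmneg' : Fev x f m' < 0 := by
        rw [hff']
        rcases lt_or_eq_of_le hFm' with hlt | heq
        · exact hlt
        · exact absurd (hexact' m' heq) h2
      rcases lt_trichotomy m m' with hlt | heq | hgt
      · have h3 := hpre' m hlt
        rw [hff'] at hFmneg
        linarith
      · exact heq
      · have := hpre m' hgt
        linarith
  -- the simplices agree
  have hUU' : T ∪ {m} = T' ∪ {m'} := by rw [hTT', hmm']
  apply Finset.Subset.antisymm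
  · intro i hi
    have hiU : i ∈ T ∪ {m} := hσU hi
    have : rk (T ∪ {m}) i ∈ mask := by
      rw [hmask]
      exact Finset.mem_image_of_mem _ hi
    rw [hmask'] at this
    obtain ⟨i', hi'σ', hi'⟩ := Finset.mem_image.1 this
    have hi'U : i' ∈ T ∪ {m} := by rw [hUU']; exact hσU' hi'σ'
    rw [← hUU'] at hi'
    have := rk_injOn (T ∪ {m}) hi'U hiU hi'
    rw [← this]
    exact hi'σ'
  · intro i hi
    have hiU : i ∈ T ∪ {m} := by rw [hUU']; exact hσU' hi
    have : rk (T' ∪ {m'}) i ∈ mask := by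
      rw [hmask']
      exact Finset.mem_image_of_mem _ hi
    rw [hmask, ← hUU'] at this
    obtain ⟨i', hi'σ, hi'⟩ := Finset.mem_image.1 this
    have hi'U : i' ∈ T ∪ {m} := hσU hi'σ
    have := rk_injOn (T ∪ {m}) hi'U hiU hi'
    rw [← this]
    exact hi'σ

end PROPS

end Incr

open Incr in
/-- For fixed `d`, the incremental Delaunay complex of `n` ordered points in general position
in `ℝ^d` has `O(n^⌈(d+1)/2⌉)` simplices.  (Note `⌈(d+1)/2⌉ = (d+2)/2` with natural division.) -/
theorem incr_size_bound (d : ℕ) :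
    ∃ C : ℕ, ∀ (n : ℕ) (x : Fin n → EuclideanSpace ℝ (Fin d)),
      Function.Injective x → GenPos x →
      {σ : Finset (Fin n) | IncrMem x σ}.ncard ≤ C * n ^ ((d + 2) / 2) := by
  classical
  refine ⟨2 ^ (d + 5), ?_⟩
  intro n x _ hx
  have hncard : {σ : Finset (Fin n) | IncrMem x σ}.ncard
      = {σ : Finset (Fin n) | IncrMem x σ}.toFinset.card :=
    Set.ncard_eq_toFinset_card' _
  rw [hncard]
  set SF := {σ : Finset (Fin n) | IncrMem x σ}.toFinset with hSF
  have hmemSF : ∀ σ, σ ∈ SF ↔ IncrMem x σ := by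
    intro σ
    rw [hSF, Set.mem_toFinset]
    rfl
  rcases Nat.eq_zero_or_pos n with hn0 | hn
  · have : SF = ∅ := by
      apply Finset.eq_empty_of_forall_notMem
      intro σ hσ
      obtain ⟨hne, _⟩ := (hmemSF σ).1 hσ
      obtain ⟨i, _⟩ := hne
      exact absurd (i.isLt) (by omega)
    rw [this]
    simp
  -- the generic functional
  obtain ⟨Λ, hΛ⟩ := exists_generic (evecSet x) (evecSet_ne_zero x)
  set bigP : Finset (Fin n) → Prop :=
    fun σ => ∃ h : σ.Nonempty, d + 1 ≤ ((σ.max' h : Fin n) : ℕ) with hbigP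
  have hsplit := Finset.card_filter_add_card_filter_not
    (s := SF) (p := bigP)
  -- small part
  have hsmall : (SF.filter (fun σ => ¬ bigP σ)).card ≤ 2 ^ (d + 1) := by
    have hsub : SF.filter (fun σ => ¬ bigP σ) ⊆
        (Finset.univ.filter (fun j : Fin n => (j : ℕ) < d + 1)).powerset := by
      intro σ hσ
      have h1 := Finset.mem_filter.1 hσ
      obtain ⟨hne, _⟩ := (hmemSF σ).1 h1.1
      apply Finset.mem_powerset.2
      intro i hi
      apply Finset.mem_filter.2
      refine ⟨Finset.mem_univ i, ?_⟩
      have h2 : ¬ (d + 1 ≤ ((σ.max' hne : Fin n) : ℕ)) := by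
        intro hcon
        exact h1.2 ⟨hne, hcon⟩
      have h3 : (i : ℕ) ≤ ((σ.max' hne : Fin n) : ℕ) := Finset.le_max' σ i hi
      omega
    calc (SF.filter (fun σ => ¬ bigP σ)).card
        ≤ ((Finset.univ.filter (fun j : Fin n => (j : ℕ) < d + 1)).powerset).card :=
          Finset.card_le_card hsub
      _ = 2 ^ (Finset.univ.filter (fun j : Fin n => (j : ℕ) < d + 1)).card :=
          Finset.card_powerset _
      _ ≤ 2 ^ (d + 1) := by
          apply Nat.pow_le_pow_right (by omega)
          have : (Finset.univ.filter (fun j : Fin n => (j : ℕ) < d + 1)).card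
              ≤ (Finset.range (d + 1)).card := by
            refine Finset.card_le_card_of_injOn (fun j => (j : ℕ)) ?_ ?_
            · intro j hj
              exact Finset.mem_range.2 (Finset.mem_filter.1 hj).2
            · intro a _ b _ hab
              exact Fin.ext hab
          simpa using this
  -- big part
  set e := (d + 2) / 2 with he
  set target : Finset (Finset (Fin n) × Bool × Bool × Finset ℕ) :=
    (Finset.univ.powersetCard e) ×ˢ ((Finset.univ : Finset Bool) ×ˢ
      ((Finset.univ : Finset Bool) ×ˢ (Finset.range (d + 2)).powerset)) with htarget
  set enc : Finset (Fin n) → Finset (Fin n) × Bool × Bool × Finset ℕ := fun σ =>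
    if h : ∃ p : Finset (Fin n) × Bool × Bool × Finset ℕ,
        Props x Λ σ p.1 p.2.1 p.2.2.1 p.2.2.2 then h.choose
    else (∅, true, true, ∅) with henc
  have hprops : ∀ σ ∈ SF.filter bigP,
      Props x Λ σ (enc σ).1 (enc σ).2.1 (enc σ).2.2.1 (enc σ).2.2.2 := by
    intro σ hσ
    have h1 := Finset.mem_filter.1 hσ
    obtain ⟨hne, hbig⟩ := h1.2
    obtain ⟨G, b1, b2, mask, hP⟩ :=
      keyExists x hx Λ hΛ σ ((hmemSF σ).1 h1.1) hne hbig
    have hex : ∃ p : Finset (Fin n) × Bool × Bool × Finset ℕ,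
        Props x Λ σ p.1 p.2.1 p.2.2.1 p.2.2.2 := ⟨(G, b1, b2, mask), hP⟩
    rw [henc]
    simp only [dif_pos hex]
    exact hex.choose_spec
  have hbig : (SF.filter bigP).card ≤ target.card := by
    apply Finset.card_le_card_of_injOn enc
    · intro σ hσ
      have hP := hprops σ hσ
      obtain ⟨T, f, hσne, hGT, hTcard, hGcard, hTm, hμ, hvan, hexact, hpre,
        hFm, hb2, hcore, hσU, hmask, hmaskrange⟩ := hP
      rw [htarget]
      refine Finset.mem_product.2 ⟨?_, Finset.mem_product.2 ⟨Finset.mem_univ _,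
        Finset.mem_product.2 ⟨Finset.mem_univ _, ?_⟩⟩⟩
      · exact Finset.mem_powersetCard.2 ⟨Finset.subset_univ _, by rw [hGcard]⟩
      · exact Finset.mem_powerset.2 hmaskrange
    · intro σ hσ σ' hσ' heq
      have hP := hprops σ hσ
      have hP' := hprops σ' hσ'
      rw [heq] at hP
      exact props_inj x Λ hP hP'
  have htargetcard : target.card ≤ n ^ e * 2 ^ (d + 4) := by
    rw [htarget]
    rw [Finset.card_product, Finset.card_product, Finset.card_product]
    have h1 : (Finset.univ.powersetCard e (α := Fin n)).card = n.choose e := by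
      rw [Finset.card_powersetCard]
      simp
    rw [h1, Finset.card_univ, Finset.card_powerset, Finset.card_range]
    have h2 : n.choose e ≤ n ^ e := Nat.choose_le_pow n e
    have h3 : Fintype.card Bool = 2 := by simp
    rw [h3]
    calc n.choose e * (2 * (2 * 2 ^ (d + 2))) = n.choose e * 2 ^ (d + 4) := by ring
      _ ≤ n ^ e * 2 ^ (d + 4) := Nat.mul_le_mul_right _ h2
  have hne1 : 1 ≤ n ^ e := Nat.one_le_pow _ _ hn
  calc SF.card = (SF.filter bigP).card + (SF.filter (fun σ => ¬ bigP σ)).card :=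
        hsplit.symm
    _ ≤ n ^ e * 2 ^ (d + 4) + 2 ^ (d + 1) := by
        have := le_trans hbig htargetcard
        omega
    _ ≤ 2 ^ (d + 5) * n ^ e := by
        have h4 : (2:ℕ) ^ (d + 1) ≤ 2 ^ (d + 4) := Nat.pow_le_pow_right (by omega) (by omega)
        have h5 : (2:ℕ) ^ (d + 4) + 2 ^ (d + 4) = 2 ^ (d + 5) := by ring
        have h6 : (2:ℕ) ^ (d + 4) ≤ 2 ^ (d + 4) * n ^ e :=
          Nat.le_mul_of_pos_right _ (by omega)
        calc n ^ e * 2 ^ (d + 4) + 2 ^ (d + 1)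
            ≤ n ^ e * 2 ^ (d + 4) + 2 ^ (d + 4) * n ^ e := by omega
          _ = 2 ^ (d + 5) * n ^ e := by rw [← h5]; ring
end

section
/- The number of conflict pairs encountered by the Bowyer–Watson incremental insertion of n points in general position in ℝ^d (satisfying the Δ-property) is O(n^{⌈(d+1)/2⌉}). -/
open Finset

/-- The Δ-property: the convex hull of all points equals the simplex spanned by the first
`d+1` points. -/
def DeltaProp {d n : ℕ} (x : Fin n → EuclideanSpace ℝ (Fin d)) : Prop :=
  convexHull ℝ (Set.range x) = convexHull ℝ (x '' {i : Fin n | (i : ℕ) < d + 1})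

/-- A conflict pair: a `d`-simplex `σ` of the Delaunay triangulation of the points preceding
`j`, whose circumsphere strictly contains the point `x j`. -/
def ConflictPair {d n : ℕ} (x : Fin n → EuclideanSpace ℝ (Fin d))
    (p : Finset (Fin n) × Fin n) : Prop :=
  p.1.card = d + 1 ∧
  DelMem x (Finset.univ.filter fun i => i < p.2) p.1 ∧
  ∃ (c : EuclideanSpace ℝ (Fin d)) (r : ℝ),
    (∀ i ∈ p.1, dist (x i) c = r) ∧ dist (x p.2) c < r

namespace BWAux

open RealInnerProductSpace Module

variable {d n : ℕ}

/-- A generic vector avoiding finitely many dual hyperplanes. -/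
lemma exists_dual_ne {V : Type*} [AddCommGroup V] [Module ℝ V]
    (Φ : Finset (Module.Dual ℝ V)) (hΦ : ∀ φ ∈ Φ, φ ≠ 0) :
    ∃ v : V, ∀ φ ∈ Φ, φ v ≠ 0 := by
  classical
  revert hΦ
  refine Finset.induction_on Φ ?_ ?_
  · intro _; exact ⟨0, by simp⟩
  · rintro φ₀ Φ' hφ₀ ih hΦ
    obtain ⟨v, hv⟩ := ih (fun φ h => hΦ φ (Finset.mem_insert_of_mem h))
    have ha0 : φ₀ ≠ 0 := hΦ φ₀ (Finset.mem_insert_self _ _)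
    have hex : ∃ z, φ₀ z ≠ 0 := by
      by_contra h; push_neg at h; exact ha0 (LinearMap.ext fun z => by simpa using h z)
    obtain ⟨z, hz⟩ := hex
    obtain ⟨ε, hε⟩ := Infinite.exists_notMem_finset
      ((insert φ₀ Φ').image fun ψ => -ψ v / ψ z)
    refine ⟨v + ε • z, ?_⟩
    intro φ hφ heq
    rw [map_add, map_smul, smul_eq_mul] at heq
    by_cases hz0 : φ z = 0
    · rw [hz0, mul_zero, add_zero] at heq
      rcases Finset.mem_insert.mp hφ with rfl | hmem
      · exact hz hz0
      · exact hv φ hmem heq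
    · apply hε
      have hεe : ε = -φ v / φ z := by field_simp; linarith
      rw [hεe]
      exact Finset.mem_image_of_mem _ hφ

lemma dist_le_iff_key (a b y : EuclideanSpace ℝ (Fin d)) :
    dist y a ≤ dist y b ↔ ⟪b - a, y⟫ ≤ (‖b‖^2 - ‖a‖^2)/2 := by
  have h1 : ‖y - a‖^2 = ‖y‖^2 - 2*⟪y,a⟫ + ‖a‖^2 := norm_sub_sq_real y a
  have h2 : ‖y - b‖^2 = ‖y‖^2 - 2*⟪y,b⟫ + ‖b‖^2 := norm_sub_sq_real y b
  have h3 : ⟪b - a, y⟫ = ⟪y,b⟫ - ⟪y,a⟫ := by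
    rw [inner_sub_left, ← real_inner_comm b y, ← real_inner_comm a y]
  rw [dist_eq_norm, dist_eq_norm,
    ← pow_le_pow_iff_left₀ (norm_nonneg _) (norm_nonneg _) (two_ne_zero), h1, h2, h3]
  constructor <;> intro h <;> linarith

lemma dist_eq_iff_key (a b y : EuclideanSpace ℝ (Fin d)) :
    dist y a = dist y b ↔ ⟪b - a, y⟫ = (‖b‖^2 - ‖a‖^2)/2 := by
  have hle := dist_le_iff_key a b y
  have hge := dist_le_iff_key b a y
  have hrel : ⟪a - b, y⟫ = -⟪b - a, y⟫ := by rw [← inner_neg_left, neg_sub]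
  constructor
  · intro h
    have hx1 := hle.mp h.le
    have hx2 := hge.mp h.ge
    rw [hrel] at hx2; linarith
  · intro h
    refine le_antisymm (hle.mpr (by linarith)) (hge.mpr ?_)
    rw [hrel]; linarith

lemma eq_of_inner_basis_zero {ι : Type*} [Fintype ι]
    (B : Basis ι ℝ (EuclideanSpace ℝ (Fin d))) {a : EuclideanSpace ℝ (Fin d)}
    (h : ∀ u, ⟪B u, a⟫ = 0) : a = 0 := by
  have h0 : ⟪a, a⟫ = 0 := by
    nth_rewrite 1 [← Basis.sum_repr B a]
    rw [sum_inner]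
    refine Finset.sum_eq_zero fun u _ => ?_
    rw [real_inner_smul_left, h u, mul_zero]
  exact inner_self_eq_zero.mp h0

/-- The local-min-implies-global-min estimate for a vertex of a "Voronoi face". -/
lemma sub_min {ι : Type*} [Fintype ι] (B : Basis ι ℝ (EuclideanSpace ℝ (Fin d)))
    (w c c' : EuclideanSpace ℝ (Fin d)) (β : ι → ℝ) (Dp : ι → Prop)
    (htc : ∀ u, ⟪B u, c⟫ = β u)
    (hfc' : ∀ u, ⟪B u, c'⟫ ≤ β u)
    (hDc' : ∀ u, Dp u → ⟪B u, c'⟫ = β u)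
    (hsign : ∀ u, ¬ Dp u → B.repr w u < 0) :
    ⟪w, c⟫ ≤ ⟪w, c'⟫ ∧ (⟪w, c'⟫ ≤ ⟪w, c⟫ → c' = c) := by
  classical
  have hexp : ∀ z : EuclideanSpace ℝ (Fin d), ⟪w, z⟫ = ∑ u, B.repr w u * ⟪B u, z⟫ := by
    intro z
    conv_lhs => rw [← Basis.sum_repr B w]
    rw [sum_inner]
    exact Finset.sum_congr rfl fun u _ => real_inner_smul_left _ _ _
  have hterm : ∀ u, 0 ≤ B.repr w u * (⟪B u, c'⟫ - ⟪B u, c⟫) := by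
    intro u
    by_cases hD : Dp u
    · rw [hDc' u hD, htc u]; simp
    · have h1 := hsign u hD
      have h2 : ⟪B u, c'⟫ - ⟪B u, c⟫ ≤ 0 := by
        have ha := hfc' u; have hb := htc u; linarith
      nlinarith
  have hsum : ⟪w, c'⟫ - ⟪w, c⟫ = ∑ u, B.repr w u * (⟪B u, c'⟫ - ⟪B u, c⟫) := by
    rw [hexp c, hexp c', ← Finset.sum_sub_distrib]
    exact Finset.sum_congr rfl fun u _ => by ring
  have hnn : (0:ℝ) ≤ ∑ u, B.repr w u * (⟪B u, c'⟫ - ⟪B u, c⟫) :=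
    Finset.sum_nonneg fun u _ => hterm u
  constructor
  · linarith
  · intro hle
    have h0 : ∑ u, B.repr w u * (⟪B u, c'⟫ - ⟪B u, c⟫) = 0 :=
      le_antisymm (by linarith) hnn
    have hz : ∀ u, ⟪B u, c' - c⟫ = 0 := by
      intro u
      have he := (Finset.sum_eq_zero_iff_of_nonneg fun u _ => hterm u).mp h0 u
        (Finset.mem_univ u)
      rw [inner_sub_right]
      by_cases hD : Dp u
      · rw [hDc' u hD, htc u]; ring
      · have h1 := hsign u hD
        rcases mul_eq_zero.mp he with h | h
        · exact absurd h h1.ne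
        · linarith
    exact sub_eq_zero.mp (eq_of_inner_basis_zero B hz)

/-- "Good" simplices: nonempty, `d+1` points, and the edge vectors from the top vertex
are linearly independent. -/
def Good (x : Fin n → EuclideanSpace ℝ (Fin d)) (σ : Finset (Fin n)) : Prop :=
  ∃ h : σ.Nonempty, σ.card = d + 1 ∧
    LinearIndependent ℝ
      (fun u : {i // i ∈ σ.erase (σ.max' h)} => x u.1 - x (σ.max' h))

noncomputable def basOf (x : Fin n → EuclideanSpace ℝ (Fin d)) (σ : Finset (Fin n))
    (hP : Good x σ) :
    Basis {i // i ∈ σ.erase (σ.max' hP.choose)} ℝ (EuclideanSpace ℝ (Fin d)) := by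
  refine Basis.mk hP.choose_spec.2 ?_
  have hcard : Fintype.card {i // i ∈ σ.erase (σ.max' hP.choose)} = d := by
    rw [Fintype.card_coe, Finset.card_erase_of_mem (σ.max'_mem hP.choose),
      hP.choose_spec.1]
    omega
  refine ge_of_eq (Submodule.eq_top_of_finrank_eq ?_)
  rw [finrank_span_eq_card hP.choose_spec.2, hcard, finrank_euclideanSpace_fin]

lemma basOf_apply (x : Fin n → EuclideanSpace ℝ (Fin d)) (σ : Finset (Fin n))
    (hP : Good x σ) (u : {i // i ∈ σ.erase (σ.max' hP.choose)}) :
    basOf x σ hP u = x u.1 - x (σ.max' hP.choose) := by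
  rw [basOf, Basis.coe_mk]

noncomputable def posOf (x : Fin n → EuclideanSpace ℝ (Fin d)) (w : EuclideanSpace ℝ (Fin d))
    (σ : Finset (Fin n)) (hP : Good x σ) : Finset {i // i ∈ σ.erase (σ.max' hP.choose)} :=
  Finset.univ.filter fun u => 0 < (basOf x σ hP).repr w u

noncomputable def negOf (x : Fin n → EuclideanSpace ℝ (Fin d)) (w : EuclideanSpace ℝ (Fin d))
    (σ : Finset (Fin n)) (hP : Good x σ) : Finset {i // i ∈ σ.erase (σ.max' hP.choose)} :=
  Finset.univ.filter fun u => (basOf x σ hP).repr w u < 0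

noncomputable def DOf (x : Fin n → EuclideanSpace ℝ (Fin d)) (w : EuclideanSpace ℝ (Fin d))
    (σ : Finset (Fin n)) (hP : Good x σ) : Finset (Fin n) :=
  (if (posOf x w σ hP).card ≤ d / 2 then posOf x w σ hP else negOf x w σ hP).image
    (fun u => u.1)

open Classical in
noncomputable def keyOf (x : Fin n → EuclideanSpace ℝ (Fin d)) (w : EuclideanSpace ℝ (Fin d))
    (σ : Finset (Fin n)) : Option (Fin n) × Bool × (Fin (d / 2) → Option (Fin n)) :=
  if h : Good x σ then
    (some (σ.max' h.choose), decide ((posOf x w σ h).card ≤ d / 2),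
      fun i => ((DOf x w σ h).sort (· ≤ ·))[(i : ℕ)]?)
  else (none, false, fun _ => none)

lemma DOf_subset (x : Fin n → EuclideanSpace ℝ (Fin d)) (w : EuclideanSpace ℝ (Fin d))
    (σ : Finset (Fin n)) (hP : Good x σ) :
    DOf x w σ hP ⊆ σ.erase (σ.max' hP.choose) := by
  intro a ha
  obtain ⟨u, _, rfl⟩ := Finset.mem_image.mp ha
  exact u.2

lemma DOf_card (x : Fin n → EuclideanSpace ℝ (Fin d)) (w : EuclideanSpace ℝ (Fin d))
    (σ : Finset (Fin n)) (hP : Good x σ) : (DOf x w σ hP).card ≤ d / 2 := by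
  classical
  rw [DOf]
  refine (Finset.card_image_le).trans ?_
  split_ifs with hb
  · exact hb
  · push_neg at hb
    have hdisj : Disjoint (posOf x w σ hP) (negOf x w σ hP) := by
      rw [Finset.disjoint_left]
      intro u hu hv
      rw [posOf, Finset.mem_filter] at hu
      rw [negOf, Finset.mem_filter] at hv
      linarith [hu.2, hv.2]
    have h1 : ((posOf x w σ hP) ∪ (negOf x w σ hP)).card ≤
        Fintype.card {i // i ∈ σ.erase (σ.max' hP.choose)} := by
      rw [← Finset.card_univ]
      exact Finset.card_le_card (Finset.subset_univ _)
    rw [Finset.card_union_of_disjoint hdisj] at h1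
    have h2 : Fintype.card {i // i ∈ σ.erase (σ.max' hP.choose)} = d := by
      rw [Fintype.card_coe, Finset.card_erase_of_mem (σ.max'_mem hP.choose),
        hP.choose_spec.1]
      omega
    omega

lemma sort_fun_inj {K : ℕ} {D D' : Finset (Fin n)} (hD : D.card ≤ K) (hD' : D'.card ≤ K)
    (h : (fun i : Fin K => (D.sort (· ≤ ·))[(i : ℕ)]?) =
      (fun i : Fin K => (D'.sort (· ≤ ·))[(i : ℕ)]?)) : D = D' := by
  have hl : D.sort (· ≤ ·) = D'.sort (· ≤ ·) := by
    apply List.ext_getElem?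
    intro k
    by_cases hk : k < K
    · exact congrFun h ⟨k, hk⟩
    · have e1 : (D.sort (· ≤ ·))[k]? = none :=
        List.getElem?_eq_none_iff.mpr (by rw [Finset.length_sort]; omega)
      have e2 : (D'.sort (· ≤ ·))[k]? = none :=
        List.getElem?_eq_none_iff.mpr (by rw [Finset.length_sort]; omega)
      rw [e1, e2]
  have h2 := congrArg List.toFinset hl
  rwa [Finset.sort_toFinset, Finset.sort_toFinset] at h2

/-- Any two spheres through a good simplex coincide. -/
lemma ccUnique {x : Fin n → EuclideanSpace ℝ (Fin d)} {σ : Finset (Fin n)}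
    (hP : Good x σ) {c₁ c₂ : EuclideanSpace ℝ (Fin d)} {r₁ r₂ : ℝ}
    (h₁ : ∀ i ∈ σ, dist (x i) c₁ = r₁) (h₂ : ∀ i ∈ σ, dist (x i) c₂ = r₂) :
    c₁ = c₂ ∧ r₁ = r₂ := by
  have hm := σ.max'_mem hP.choose
  have key : ∀ u : {i // i ∈ σ.erase (σ.max' hP.choose)},
      ⟪basOf x σ hP u, c₂ - c₁⟫ = 0 := by
    intro u
    have hu : u.1 ∈ σ := Finset.mem_of_mem_erase u.2
    rw [basOf_apply, inner_sub_right]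
    have e1 : ⟪x u.1 - x (σ.max' hP.choose), c₁⟫
        = (‖x u.1‖^2 - ‖x (σ.max' hP.choose)‖^2)/2 := by
      refine (dist_eq_iff_key _ _ _).mp ?_
      rw [dist_comm c₁ (x (σ.max' hP.choose)), dist_comm c₁ (x u.1), h₁ _ hm, h₁ _ hu]
    have e2 : ⟪x u.1 - x (σ.max' hP.choose), c₂⟫
        = (‖x u.1‖^2 - ‖x (σ.max' hP.choose)‖^2)/2 := by
      refine (dist_eq_iff_key _ _ _).mp ?_
      rw [dist_comm c₂ (x (σ.max' hP.choose)), dist_comm c₂ (x u.1), h₂ _ hm, h₂ _ hu]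
    rw [e1, e2]; ring
  have hc : c₁ = c₂ := (sub_eq_zero.mp (eq_of_inner_basis_zero (basOf x σ hP) key)).symm
  refine ⟨hc, ?_⟩
  rw [← h₁ _ hm, ← h₂ _ hm, hc]

/-- From general position: only points of `σ` lie on the circumsphere of `σ`. -/
lemma tightOf {x : Fin n → EuclideanSpace ℝ (Fin d)} (hGP : GenPos x) {σ : Finset (Fin n)}
    (hP : Good x σ) (hcard : σ.card = d + 1) {c : EuclideanSpace ℝ (Fin d)} {r : ℝ}
    (hsph : ∀ i ∈ σ, dist (x i) c = r) : ∀ k, dist (x k) c = r → k ∈ σ := by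
  intro k hk
  by_contra hks
  refine (hGP σ hP.choose (le_of_eq hcard)).2 c r ⟨hsph, ?_⟩ k hks hk
  intro c' r' hsp'
  exact (ccUnique hP hsph hsp').2.le

lemma conflict_good {x : Fin n → EuclideanSpace ℝ (Fin d)} (hGP : GenPos x)
    {σ : Finset (Fin n)} {j : Fin n} (hp : ConflictPair x (σ, j)) : Good x σ := by
  obtain ⟨hcard, hDel, -⟩ := hp
  obtain ⟨hne, -, -⟩ := hDel
  replace hcard : σ.card = d + 1 := hcard
  refine ⟨hne, hcard, ?_⟩
  have hAI := (hGP σ hne (le_of_eq hcard)).1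
  have hm : σ.max' hne ∈ σ := σ.max'_mem hne
  have h1 := (affineIndependent_iff_linearIndependent_vsub ℝ (fun i : σ => x i)
    ⟨σ.max' hne, hm⟩).mp hAI
  exact h1.comp
    (fun u : {i // i ∈ σ.erase (σ.max' hne)} =>
      (⟨⟨u.1, Finset.mem_of_mem_erase u.2⟩, fun hEq =>
        (Finset.ne_of_mem_erase u.2) (congrArg Subtype.val hEq)⟩ :
        {w : {i // i ∈ σ} // w ≠ ⟨σ.max' hne, hm⟩}))
    (fun u v huv => Subtype.ext (congrArg (fun z => z.1.1) huv))

lemma exists_w (x : Fin n → EuclideanSpace ℝ (Fin d)) :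
    ∃ w : EuclideanSpace ℝ (Fin d),
      ∀ σ (hP : Good x σ) u, (basOf x σ hP).repr w u ≠ 0 := by
  classical
  have hΦ : ∀ φ ∈ ((Finset.univ : Finset (Σ σg : {σ : Finset (Fin n) // Good x σ},
      {i // i ∈ σg.1.erase (σg.1.max' σg.2.choose)})).image
      (fun jj => (basOf x jj.1.1 jj.1.2).coord jj.2)), φ ≠ 0 := by
    intro φ hφ
    obtain ⟨jj, -, rfl⟩ := Finset.mem_image.mp hφ
    intro h0
    have h1 := congrArg (fun ψ : Module.Dual ℝ (EuclideanSpace ℝ (Fin d)) =>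
      ψ (basOf x jj.1.1 jj.1.2 jj.2)) h0
    simp only [Basis.coord_apply, Basis.repr_self_apply, LinearMap.zero_apply] at h1
    simp at h1
  obtain ⟨w, hw⟩ := exists_dual_ne _ hΦ
  refine ⟨w, fun σ hP u => ?_⟩
  have hmem := Finset.mem_image_of_mem
    (fun jj : (Σ σg : {σ : Finset (Fin n) // Good x σ},
      {i // i ∈ σg.1.erase (σg.1.max' σg.2.choose)}) =>
      (basOf x jj.1.1 jj.1.2).coord jj.2)
    (Finset.mem_univ ⟨⟨σ, hP⟩, u⟩)
  have h2 := hw _ hmem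
  rwa [Basis.coord_apply] at h2

lemma key_inj {x : Fin n → EuclideanSpace ℝ (Fin d)} (hGP : GenPos x)
    {w : EuclideanSpace ℝ (Fin d)}
    (hw : ∀ σ (hP : Good x σ) u, (basOf x σ hP).repr w u ≠ 0)
    {p q : Finset (Fin n) × Fin n} (hp : ConflictPair x p) (hq : ConflictPair x q)
    (hkey : keyOf x w p.1 = keyOf x w q.1) : p = q := by
  classical
  obtain ⟨σ, j⟩ := p
  obtain ⟨τ, l⟩ := q
  have hPσ : Good x σ := conflict_good hGP hp
  have hPτ : Good x τ := conflict_good hGP hq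
  simp only [keyOf] at hkey
  rw [dif_pos hPσ, dif_pos hPτ, Prod.mk.injEq, Prod.mk.injEq] at hkey
  obtain ⟨hm0, hbit0, hfun⟩ := hkey
  have hm : σ.max' hPσ.choose = τ.max' hPτ.choose := Option.some.inj hm0
  have hbit : ((posOf x w σ hPσ).card ≤ d / 2) ↔ ((posOf x w τ hPτ).card ≤ d / 2) :=
    decide_eq_decide.mp hbit0
  have hD : DOf x w σ hPσ = DOf x w τ hPτ :=
    sort_fun_inj (DOf_card x w σ hPσ) (DOf_card x w τ hPτ) hfun
  obtain ⟨hcardσ, hDelσ, cx, rx, hsphx, hltx⟩ := hp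
  obtain ⟨hneσ, hsubσ, c, r, hsph, hmin⟩ := hDelσ
  obtain ⟨hcardτ, hDelτ, cy, ry, hsphy, hlty⟩ := hq
  obtain ⟨hneτ, hsubτ, c', r', hsph', hmin'⟩ := hDelτ
  replace hcardσ : σ.card = d + 1 := hcardσ
  replace hcardτ : τ.card = d + 1 := hcardτ
  replace hsubσ : σ ⊆ Finset.univ.filter (fun i => i < j) := hsubσ
  replace hsubτ : τ ⊆ Finset.univ.filter (fun i => i < l) := hsubτ
  replace hsphx : ∀ i ∈ σ, dist (x i) cx = rx := hsphx
  replace hsphy : ∀ i ∈ τ, dist (x i) cy = ry := hsphy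
  replace hltx : dist (x j) cx < rx := hltx
  replace hlty : dist (x l) cy < ry := hlty
  set m := σ.max' hPσ.choose with hmdef
  have hmσ : m ∈ σ := σ.max'_mem hPσ.choose
  have hmτ : m ∈ τ := by rw [hm]; exact τ.max'_mem hPτ.choose
  have hmj : m < j := by
    have h := hsubσ hmσ; rw [Finset.mem_filter] at h; exact h.2
  have hml : m < l := by
    have h := hsubτ hmτ; rw [Finset.mem_filter] at h; exact h.2
  set ws : EuclideanSpace ℝ (Fin d) :=
    if (posOf x w σ hPσ).card ≤ d / 2 then w else -w with hwsdef
  -- σ-side hypotheses for `sub_min`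
  have htcσ : ∀ u : {i // i ∈ σ.erase m},
      ⟪basOf x σ hPσ u, c⟫ = (‖x u.1‖^2 - ‖x m‖^2)/2 := by
    intro u
    rw [basOf_apply]
    refine (dist_eq_iff_key (x m) (x u.1) c).mp ?_
    rw [dist_comm c (x m), dist_comm c (x u.1), hsph _ hmσ,
      hsph _ (Finset.mem_of_mem_erase u.2)]
  have hfcσ : ∀ u : {i // i ∈ σ.erase m},
      ⟪basOf x σ hPσ u, c'⟫ ≤ (‖x u.1‖^2 - ‖x m‖^2)/2 := by
    intro u
    rw [basOf_apply]
    refine (dist_le_iff_key (x m) (x u.1) c').mp ?_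
    have h1 : dist c' (x m) = r' := by rw [dist_comm]; exact hsph' _ hmτ
    have h2 : r' ≤ dist c' (x u.1) := by
      rw [dist_comm]
      refine hmin' u.1 ?_
      rw [Finset.mem_filter]
      exact ⟨Finset.mem_univ _,
        lt_of_le_of_lt (σ.le_max' u.1 (Finset.mem_of_mem_erase u.2)) hml⟩
    rw [h1]; exact h2
  have hDcσ : ∀ u : {i // i ∈ σ.erase m}, u.1 ∈ DOf x w σ hPσ →
      ⟪basOf x σ hPσ u, c'⟫ = (‖x u.1‖^2 - ‖x m‖^2)/2 := by
    intro u hu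
    rw [basOf_apply]
    refine (dist_eq_iff_key (x m) (x u.1) c').mp ?_
    have huτ : u.1 ∈ τ := Finset.mem_of_mem_erase (DOf_subset x w τ hPτ (hD ▸ hu))
    rw [dist_comm c' (x m), dist_comm c' (x u.1), hsph' _ hmτ, hsph' _ huτ]
  have hsgnσ : ∀ u : {i // i ∈ σ.erase m}, ¬ u.1 ∈ DOf x w σ hPσ →
      (basOf x σ hPσ).repr ws u < 0 := by
    intro u hu
    have hne0 := hw σ hPσ u
    by_cases hb : (posOf x w σ hPσ).card ≤ d / 2
    · have hws : ws = w := by rw [hwsdef, if_pos hb]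
      have hnp : u ∉ posOf x w σ hPσ := fun hp' => hu (by
        rw [DOf, if_pos hb]; exact Finset.mem_image_of_mem _ hp')
      rw [posOf, Finset.mem_filter] at hnp
      push_neg at hnp
      rw [hws]
      exact lt_of_le_of_ne (hnp (Finset.mem_univ u)) hne0
    · have hws : ws = -w := by rw [hwsdef, if_neg hb]
      have hnn : u ∉ negOf x w σ hPσ := fun hn' => hu (by
        rw [DOf, if_neg hb]; exact Finset.mem_image_of_mem _ hn')
      rw [negOf, Finset.mem_filter] at hnn
      push_neg at hnn
      have hpos : 0 < (basOf x σ hPσ).repr w u :=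
        lt_of_le_of_ne (hnn (Finset.mem_univ u)) (Ne.symm hne0)
      rw [hws, map_neg]
      simp only [Finsupp.coe_neg, Pi.neg_apply]
      linarith
  have hσside := sub_min (basOf x σ hPσ) ws c c'
    (fun u => (‖x u.1‖^2 - ‖x m‖^2)/2) (fun u => u.1 ∈ DOf x w σ hPσ)
    htcσ hfcσ hDcσ hsgnσ
  -- τ-side hypotheses for `sub_min`
  have hxm : x (τ.max' hPτ.choose) = x m := by rw [hm]
  have htcτ : ∀ u : {i // i ∈ τ.erase (τ.max' hPτ.choose)},
      ⟪basOf x τ hPτ u, c'⟫ = (‖x u.1‖^2 - ‖x m‖^2)/2 := by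
    intro u
    rw [basOf_apply, hxm]
    refine (dist_eq_iff_key (x m) (x u.1) c').mp ?_
    rw [dist_comm c' (x m), dist_comm c' (x u.1), hsph' _ hmτ,
      hsph' _ (Finset.mem_of_mem_erase u.2)]
  have hfcτ : ∀ u : {i // i ∈ τ.erase (τ.max' hPτ.choose)},
      ⟪basOf x τ hPτ u, c⟫ ≤ (‖x u.1‖^2 - ‖x m‖^2)/2 := by
    intro u
    rw [basOf_apply, hxm]
    refine (dist_le_iff_key (x m) (x u.1) c).mp ?_
    have h1 : dist c (x m) = r := by rw [dist_comm]; exact hsph _ hmσ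
    have h2 : r ≤ dist c (x u.1) := by
      rw [dist_comm]
      refine hmin u.1 ?_
      rw [Finset.mem_filter]
      refine ⟨Finset.mem_univ _, ?_⟩
      have hle : u.1 ≤ τ.max' hPτ.choose :=
        τ.le_max' u.1 (Finset.mem_of_mem_erase u.2)
      exact lt_of_le_of_lt (le_trans hle (le_of_eq hm.symm)) hmj
    rw [h1]; exact h2
  have hDcτ : ∀ u : {i // i ∈ τ.erase (τ.max' hPτ.choose)}, u.1 ∈ DOf x w τ hPτ →
      ⟪basOf x τ hPτ u, c⟫ = (‖x u.1‖^2 - ‖x m‖^2)/2 := by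
    intro u hu
    rw [basOf_apply, hxm]
    refine (dist_eq_iff_key (x m) (x u.1) c).mp ?_
    have huσ : u.1 ∈ σ := Finset.mem_of_mem_erase (DOf_subset x w σ hPσ (hD ▸ hu))
    rw [dist_comm c (x m), dist_comm c (x u.1), hsph _ hmσ, hsph _ huσ]
  have hsgnτ : ∀ u : {i // i ∈ τ.erase (τ.max' hPτ.choose)}, ¬ u.1 ∈ DOf x w τ hPτ →
      (basOf x τ hPτ).repr ws u < 0 := by
    intro u hu
    have hne0 := hw τ hPτ u
    by_cases hb : (posOf x w σ hPσ).card ≤ d / 2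
    · have hbτ : (posOf x w τ hPτ).card ≤ d / 2 := hbit.mp hb
      have hws : ws = w := by rw [hwsdef, if_pos hb]
      have hnp : u ∉ posOf x w τ hPτ := fun hp' => hu (by
        rw [DOf, if_pos hbτ]; exact Finset.mem_image_of_mem _ hp')
      rw [posOf, Finset.mem_filter] at hnp
      push_neg at hnp
      rw [hws]
      exact lt_of_le_of_ne (hnp (Finset.mem_univ u)) hne0
    · have hbτ : ¬ (posOf x w τ hPτ).card ≤ d / 2 := fun hx => hb (hbit.mpr hx)
      have hws : ws = -w := by rw [hwsdef, if_neg hb]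
      have hnn : u ∉ negOf x w τ hPτ := fun hn' => hu (by
        rw [DOf, if_neg hbτ]; exact Finset.mem_image_of_mem _ hn')
      rw [negOf, Finset.mem_filter] at hnn
      push_neg at hnn
      have hpos : 0 < (basOf x τ hPτ).repr w u :=
        lt_of_le_of_ne (hnn (Finset.mem_univ u)) (Ne.symm hne0)
      rw [hws, map_neg]
      simp only [Finsupp.coe_neg, Pi.neg_apply]
      linarith
  have hτside := sub_min (basOf x τ hPτ) ws c' c
    (fun u => (‖x u.1‖^2 - ‖x m‖^2)/2) (fun u => u.1 ∈ DOf x w τ hPτ)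
    htcτ hfcτ hDcτ hsgnτ
  -- combine: the two circumcenters coincide
  have hcc : c' = c := hσside.2 hτside.1
  have hrr : r' = r := by
    rw [← hsph' _ hmτ, ← hsph _ hmσ, hcc]
  have hts : τ ⊆ σ := by
    intro k hk
    refine tightOf hGP hPσ hcardσ hsph k ?_
    rw [← hrr, ← hsph' _ hk, hcc]
  have hστ : σ = τ := (Finset.eq_of_subset_of_card_le hts (by omega)).symm
  subst hστ
  have hjl : j = l := by
    by_contra hne
    rcases Ne.lt_or_gt hne with hlt | hlt
    · obtain ⟨he1, he2⟩ := ccUnique hPσ hsphx hsph'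
      have h5 := hmin' j (Finset.mem_filter.mpr ⟨Finset.mem_univ _, hlt⟩)
      rw [he1, he2] at hltx
      linarith
    · obtain ⟨he1, he2⟩ := ccUnique hPσ hsphy hsph
      have h5 := hmin l (Finset.mem_filter.mpr ⟨Finset.mem_univ _, hlt⟩)
      rw [he1, he2] at hlty
      linarith
  rw [hjl]

end BWAux

/-- For fixed `d`, the number of conflict pairs encountered by the Bowyer–Watson incremental
insertion of `n` points in general position satisfying the Δ-property is
`O(n^⌈(d+1)/2⌉)`.  (Note `⌈(d+1)/2⌉ = (d+2)/2` with natural division.) -/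
theorem conflict_pairs_bound (d : ℕ) :
    ∃ C : ℕ, ∀ (n : ℕ) (x : Fin n → EuclideanSpace ℝ (Fin d)),
      Function.Injective x → GenPos x → DeltaProp x →
      {p : Finset (Fin n) × Fin n | ConflictPair x p}.ncard ≤ C * n ^ ((d + 2) / 2) := by
  classical
  refine ⟨2 ^ (d / 2 + 2), ?_⟩
  intro n x hinj hGP hΔ
  obtain ⟨w, hw⟩ := BWAux.exists_w x
  set S : Set (Finset (Fin n) × Fin n) := {p | ConflictPair x p} with hS
  letI : Fintype ↥S := Fintype.ofFinite _
  have h1 : S.ncard ≤ Fintype.card (Option (Fin n) × Bool × (Fin (d / 2) → Option (Fin n))) := by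
    rw [Set.ncard_eq_toFinset_card', ← Finset.card_univ]
    refine Finset.card_le_card_of_injOn (fun p => BWAux.keyOf x w p.1)
      (fun _ _ => Finset.mem_univ _) ?_
    intro p hp q hq hpq
    rw [Finset.mem_coe, Set.mem_toFinset] at hp hq
    exact BWAux.key_inj hGP hw hp hq hpq
  have h2 : Fintype.card (Option (Fin n) × Bool × (Fin (d / 2) → Option (Fin n)))
      = (n + 1) * (2 * (n + 1) ^ (d / 2)) := by
    simp [Fintype.card_fun]
  rcases Nat.eq_zero_or_pos n with hn | hn
  · subst hn
    have : S = ∅ := Set.eq_empty_iff_forall_notMem.mpr (fun p _ => p.2.elim0)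
    rw [this]
    simp
  · have he : (d + 2) / 2 = d / 2 + 1 := by omega
    rw [he]
    have h3 : (n + 1) * (2 * (n + 1) ^ (d / 2)) ≤ 2 ^ (d / 2 + 2) * n ^ (d / 2 + 1) := by
      have hn1 : n + 1 ≤ 2 * n := by omega
      calc (n + 1) * (2 * (n + 1) ^ (d / 2))
          ≤ (2 * n) * (2 * (2 * n) ^ (d / 2)) :=
            Nat.mul_le_mul hn1 (Nat.mul_le_mul_left _ (Nat.pow_le_pow_left hn1 _))
        _ = 2 ^ (d / 2 + 2) * n ^ (d / 2 + 1) := by rw [mul_pow]; ring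
    omega
end

section
/- A nonempty σ ⊂ X with max(σ) = x_k lies in the sublevel Delaunay bifiltration Del_{r,s}(γ) if and only if γ(x_k) ≤ s and σ ∈ SelDel_r(X_k, X_{k−1}); in particular, for σ ∈ I(X), the incremental Delaunay radius ρ_σ equals the selective Delaunay radius ρ_{σ, X_{k−1}}. -/
open Finset

/-- The set of radii of spheres witnessing the incremental Delaunay condition for `σ`:
circumspheres of `σ \ {max σ}` with `max σ` on or inside and all earlier points on or
outside.  Its infimum is the incremental Delaunay radius `ρ_σ`. -/
def incrSet {d n : ℕ} (x : Fin n → EuclideanSpace ℝ (Fin d))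
    (σ : Finset (Fin n)) : Set ℝ :=
  {r | ∃ h : σ.Nonempty, ∃ c : EuclideanSpace ℝ (Fin d),
    (∀ i ∈ σ.erase (σ.max' h), dist (x i) c = r) ∧
    dist (x (σ.max' h)) c ≤ r ∧
    ∀ i : Fin n, i < σ.max' h → r ≤ dist (x i) c}

/-- The set of radii of spheres with all of `σ` on or inside and all of `E` on or outside;
its infimum is the selective Delaunay radius `ρ_{σ,E}`. -/
def selSet {d n : ℕ} (x : Fin n → EuclideanSpace ℝ (Fin d))
    (E σ : Finset (Fin n)) : Set ℝ :=
  {r | ∃ c : EuclideanSpace ℝ (Fin d),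
    (∀ i ∈ σ, dist (x i) c ≤ r) ∧ ∀ i ∈ E, r ≤ dist (x i) c}

/-- `σ ∈ SelDel_r(Y, E)`: `σ` is a nonempty subset of `Y` belonging to `SelDel(Y, E)`,
with selective Delaunay radius at most `r`. -/
def SelDelMem {d n : ℕ} (x : Fin n → EuclideanSpace ℝ (Fin d))
    (Y E : Finset (Fin n)) (r : ℝ) (σ : Finset (Fin n)) : Prop :=
  σ.Nonempty ∧ σ ⊆ Y ∧ (selSet x E σ).Nonempty ∧ sInf (selSet x E σ) ≤ r

/-- `σ ∈ Del_{r,s}(γ)`: `σ` is a simplex of the incremental Delaunay complex with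
incremental Delaunay radius `ρ_σ ≤ r` and `γ(max σ) ≤ s`. -/
def DelBiMem {d n : ℕ} (x : Fin n → EuclideanSpace ℝ (Fin d)) (γ : Fin n → ℝ)
    (r s : ℝ) (σ : Finset (Fin n)) : Prop :=
  (incrSet x σ).Nonempty ∧ sInf (incrSet x σ) ≤ r ∧
    ∃ h : σ.Nonempty, γ (σ.max' h) ≤ s

/-- A nonempty `σ` with `max σ = x_k` lies in `Del_{r,s}(γ)` iff `γ(x_k) ≤ s` and
`σ ∈ SelDel_r(X_k, X_{k-1})`; moreover for `σ ∈ I(X)` the incremental Delaunay radius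
equals the selective Delaunay radius `ρ_{σ, X_{k-1}}`. -/
theorem delBi_iff_selDel {d n : ℕ} (x : Fin n → EuclideanSpace ℝ (Fin d))
    (hinj : Function.Injective x) (hgp : GenPos x)
    (γ : Fin n → ℝ) (hγ : Monotone γ) (r s : ℝ) (hr : 0 ≤ r)
    (σ : Finset (Fin n)) (hσ : σ.Nonempty) :
    (DelBiMem x γ r s σ ↔
      (γ (σ.max' hσ) ≤ s ∧
        SelDelMem x (Finset.univ.filter fun i => i ≤ σ.max' hσ)
          (Finset.univ.filter fun i => i < σ.max' hσ) r σ)) ∧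
    ((incrSet x σ).Nonempty →
      sInf (incrSet x σ) =
        sInf (selSet x (Finset.univ.filter fun i => i < σ.max' hσ) σ)) := by

  have hset : incrSet x σ =
      selSet x (Finset.univ.filter fun i => i < σ.max' hσ) σ := by
    ext ρ
    constructor
    · rintro ⟨h, c, heq, hle, hout⟩
      refine ⟨c, ?_, ?_⟩
      · intro i hi
        rcases eq_or_ne i (σ.max' hσ) with h1 | h1
        · rw [h1]; exact hle
        · exact le_of_eq (heq i (Finset.mem_erase.mpr ⟨h1, hi⟩))
      · intro i hi
        exact hout i (by simpa using hi)
    · rintro ⟨c, hin, hout⟩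
      refine ⟨hσ, c, ?_, hin _ (σ.max'_mem hσ), ?_⟩
      · intro i hi
        obtain ⟨hne, hiσ⟩ := Finset.mem_erase.mp hi
        have hlt : i < σ.max' hσ := lt_of_le_of_ne (σ.le_max' i hiσ) hne
        exact le_antisymm (hin i hiσ) (hout i (by simp [hlt]))
      · intro i hi
        exact hout i (by simp [hi])
  constructor
  · constructor
    · rintro ⟨hne, hinf, h, hgs⟩
      exact ⟨hgs, hσ,
        fun i hi => Finset.mem_filter.mpr ⟨Finset.mem_univ i, σ.le_max' i hi⟩,
        hset ▸ hne, hset ▸ hinf⟩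
    · rintro ⟨hgs, -, -, hne, hinf⟩
      refine ⟨?_, ?_, hσ, hgs⟩
      · rw [hset]; exact hne
      · rw [hset]; exact hinf
  · intro _
    rw [hset]
end

section
/- For any r ≥ 0, s ∈ ℝ, and function γ: X → ℝ on a finite X ⊂ ℝ^d in general position, one has the inclusions Del_{r,s}(γ) ⊂ DelČech_{r,s}(γ) ⊂ Čech_{r,s}(γ). -/
open Finset

/-- Radii of balls enclosing `σ`; the infimum is the minimum enclosing ball radius `r_σ`. -/
def mebSet {d n : ℕ} (x : Fin n → EuclideanSpace ℝ (Fin d))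
    (σ : Finset (Fin n)) : Set ℝ :=
  {r | ∃ c : EuclideanSpace ℝ (Fin d), ∀ i ∈ σ, dist (x i) c ≤ r}

/-- `σ ∈ DelČech_{r,s}(γ)`: `σ ∈ I(X)`, `r_σ ≤ r` and `γ(max σ) ≤ s`. -/
def DelCechBiMem {d n : ℕ} (x : Fin n → EuclideanSpace ℝ (Fin d)) (γ : Fin n → ℝ)
    (r s : ℝ) (σ : Finset (Fin n)) : Prop :=
  (incrSet x σ).Nonempty ∧ sInf (mebSet x σ) ≤ r ∧
    ∃ h : σ.Nonempty, γ (σ.max' h) ≤ s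

/-- `σ ∈ Čech_{r,s}(γ)`: `σ` is a nonempty subset of the `s`-sublevel set of `γ` with
minimum enclosing ball radius at most `r`. -/
def CechBiMem {d n : ℕ} (x : Fin n → EuclideanSpace ℝ (Fin d)) (γ : Fin n → ℝ)
    (r s : ℝ) (σ : Finset (Fin n)) : Prop :=
  σ.Nonempty ∧ (∀ i ∈ σ, γ i ≤ s) ∧ sInf (mebSet x σ) ≤ r

/-- The inclusions `Del_{r,s}(γ) ⊆ DelČech_{r,s}(γ) ⊆ Čech_{r,s}(γ)`. -/
theorem delBi_subset_delCechBi_subset_cechBi {d n : ℕ}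
    (x : Fin n → EuclideanSpace ℝ (Fin d))
    (hinj : Function.Injective x) (hgp : GenPos x)
    (γ : Fin n → ℝ) (hγ : Monotone γ) (r s : ℝ) (hr : 0 ≤ r) :
    (∀ σ, DelBiMem x γ r s σ → DelCechBiMem x γ r s σ) ∧
    (∀ σ, DelCechBiMem x γ r s σ → CechBiMem x γ r s σ) := by
  have hsub : ∀ σ : Finset (Fin n), incrSet x σ ⊆ mebSet x σ := by
    intro σ ρ hρ
    obtain ⟨h, c, heq, hmax, _⟩ := hρ
    refine ⟨c, fun i hi => ?_⟩
    by_cases hi' : i = σ.max' h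
    · subst hi'; exact hmax
    · exact le_of_eq (heq i (Finset.mem_erase.mpr ⟨hi', hi⟩))
  have hbdd : ∀ σ : Finset (Fin n), σ.Nonempty → BddBelow (mebSet x σ) := by
    intro σ ⟨i, hi⟩
    exact ⟨0, fun ρ ⟨c, hc⟩ => le_trans dist_nonneg (hc i hi)⟩
  constructor
  · rintro σ ⟨hne, hinf, hγs⟩
    obtain ⟨hσ, -⟩ := id hγs
    refine ⟨hne, le_trans (csInf_le_csInf (hbdd σ hσ) hne (hsub σ)) hinf, hγs⟩
  · rintro σ ⟨hne, hinf, hσ, hγs⟩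
    refine ⟨hσ, fun i hi => ?_, hinf⟩
    exact le_trans (hγ (Finset.le_max' σ i hi)) hγs
end
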